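/- arXiv:1902.05302 — 7 statements merged into one kernel-verified Lean document; each statement's English description precedes it below -/
import Mathlib

section
/- For every integer r ≥ 1, the one-variable polynomial F_{r,1}(x) has degree r^2 and its leading coefficient equals [1!·2!⋯(r−1)!]^3 / (r!·(r+1)!⋯(2r−1)!). -/
open Nat

/-- The one-variable polynomial `F_{r,1}(x)`: the determinant of the r×r matrix whose
rows are indexed by `n = 1,…,r`, columns by `m = 0,…,r−1`, with `(n,m)` entry
`B_{n+m}(x)/(n+m)`, where `B_k` is the k-th Bernoulli polynomial. -/
noncomputable def Fone (r : ℕ) : Polynomial ℚ :=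
  Matrix.det (Matrix.of fun (n m : Fin r) =>
    Polynomial.C ((((n : ℕ) + 1 + (m : ℕ) : ℕ) : ℚ))⁻¹ *
      Polynomial.bernoulli ((n : ℕ) + 1 + (m : ℕ)))

section Aux
open Polynomial Finset

lemma det_mul_row_col {n : ℕ} (u v : Fin n → ℚ) (A : Matrix (Fin n) (Fin n) ℚ) :
    Matrix.det (Matrix.of fun i j => u i * (v j * A i j)) =
      (∏ i, u i) * ((∏ j, v j) * Matrix.det A) := by
  have hc := Matrix.det_mul_column u (Matrix.of fun i j => v j * A i j)
  simp only [Matrix.of_apply] at hc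
  rw [hc]
  congr 1
  exact Matrix.det_mul_row v A

lemma cauchy_det (x y : ℕ → ℚ) :
    ∀ n : ℕ, (∀ i j, i < n → j < n → x i + y j ≠ 0) →
    Matrix.det (Matrix.of fun (i j : Fin n) => (x i + y j)⁻¹) =
      (∏ j ∈ Finset.range n, ∏ i ∈ Finset.range j, ((x j - x i) * (y j - y i))) /
        ∏ i ∈ Finset.range n, ∏ j ∈ Finset.range n, (x i + y j) := by
  intro n
  induction n with
  | zero => intro _; simp
  | succ n ih =>
    intro h
    set L : Fin (n+1) := Fin.last n with hL
    -- Step 1: row operations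
    set B : Matrix (Fin (n+1)) (Fin (n+1)) ℚ := Matrix.of fun i j =>
      if i = L then (x n + y j)⁻¹ else (x i + y j)⁻¹ - (x n + y j)⁻¹ with hB
    have step1 : Matrix.det (Matrix.of fun (i j : Fin (n+1)) => (x i + y j)⁻¹) = Matrix.det B := by
      apply Matrix.det_eq_of_forall_row_eq_smul_add_const
        (c := fun i => if i = L then 0 else 1) (k := L) (by simp)
      intro i j
      by_cases hi : i = L
      · simp [hB, hi, hL]
      · have hi' : ¬ i = Fin.last n := hL ▸ hi
        simp [hB, hi, hi', hL]
    -- Step 2: factor rows/columns of B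
    set G : Matrix (Fin (n+1)) (Fin (n+1)) ℚ := Matrix.of fun i j =>
      if i = L then 1 else (x i + y j)⁻¹ with hG
    have step2 : Matrix.det B =
        (∏ i ∈ Finset.range n, (x n - x i)) * ((∏ j ∈ Finset.range (n+1), (x n + y j)⁻¹) *
          Matrix.det G) := by
      have key : B = Matrix.of (fun (i j : Fin (n+1)) =>
          (if i = L then 1 else (x n - x i)) * ((x n + y j)⁻¹ * G i j)) := by
        ext i j
        by_cases hi : i = L
        · simp [hB, hG, hi]
        · have hxi : x i + y j ≠ 0 := h i j (i.isLt) (j.isLt)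
          have hxn : x n + y j ≠ 0 := h n j (by omega) (j.isLt)
          simp only [hB, hG, Matrix.of_apply, if_neg hi]
          have e : x n - x (i:ℕ) = (x n + y j) - (x (i:ℕ) + y j) := by ring
          rw [inv_sub_inv hxi hxn, e, div_eq_mul_inv, mul_inv]
          ring
      rw [key, det_mul_row_col]
      have e1 : (∏ i : Fin (n+1), (if i = L then 1 else x n - x (i:ℕ))) = ∏ i ∈ Finset.range n, (x n - x i) := by
        rw [Fin.prod_univ_castSucc, if_pos rfl, mul_one,
          Finset.prod_congr rfl (fun (i : Fin n) _ => if_neg (Fin.castSucc_lt_last i).ne)]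
        exact Fin.prod_univ_eq_prod_range (fun i => x n - x i) n
      have e2 : (∏ j : Fin (n+1), (x n + y (j:ℕ))⁻¹) = ∏ j ∈ Finset.range (n+1), (x n + y j)⁻¹ :=
        Fin.prod_univ_eq_prod_range (fun j => (x n + y j)⁻¹) (n+1)
      rw [e1, e2]
    -- Step 3: column operations on G and expansion along the last row
    have step3 : Matrix.det G =
        (∏ i ∈ Finset.range n, (x i + y n)⁻¹) * ((∏ j ∈ Finset.range n, (y n - y j)) *
          Matrix.det (Matrix.of fun (i j : Fin n) => (x i + y j)⁻¹)) := by
      set K : Matrix (Fin (n+1)) (Fin (n+1)) ℚ := Matrix.of fun i j =>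
        if j = L then G i L else G i j - G i L with hK
      have hGK : Matrix.det G = Matrix.det K := by
        rw [← Matrix.det_transpose G, ← Matrix.det_transpose K]
        apply Matrix.det_eq_of_forall_row_eq_smul_add_const
          (c := fun j => if j = L then 0 else 1) (k := L) (by simp)
        intro j i
        show G i j = K i j + (if j = L then (0:ℚ) else 1) * K i L
        by_cases hj : j = L
        · simp [hK, hj]
        · simp [hK, hj]
      rw [hGK, Matrix.det_succ_row K L, Finset.sum_eq_single L]
      · have hKLL : K L L = 1 := by simp [hK, hG]
        have hsign : ((-1 : ℚ)) ^ ((L:ℕ) + (L:ℕ)) = 1 := by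
          rw [← two_mul, pow_mul]; norm_num
        rw [hKLL, hsign, one_mul]
        have hsub : K.submatrix L.succAbove L.succAbove
            = Matrix.of fun (i j : Fin n) => (x i + y n)⁻¹ *
                ((y n - y j) * (Matrix.of (fun (i j : Fin n) => (x i + y j)⁻¹) i j)) := by
          ext i j
          have hci : (i.castSucc : Fin (n+1)) ≠ L := (Fin.castSucc_lt_last i).ne
          have hcj : (j.castSucc : Fin (n+1)) ≠ L := (Fin.castSucc_lt_last j).ne
          simp only [Matrix.submatrix_apply, hL, Fin.succAbove_last, hK, hG, Matrix.of_apply,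
            if_neg hci, if_neg hcj, if_neg (Fin.castSucc_lt_last i).ne,
            if_neg (Fin.castSucc_lt_last j).ne, Fin.coe_castSucc, Fin.val_last]
          have hxi : x (i:ℕ) + y (j:ℕ) ≠ 0 := h i j (by omega) (by omega)
          have hxn : x (i:ℕ) + y n ≠ 0 := h i n (by omega) (by omega)
          have e : y n - y (j:ℕ) = (x (i:ℕ) + y n) - (x (i:ℕ) + y (j:ℕ)) := by ring
          rw [inv_sub_inv hxi hxn, e, div_eq_mul_inv, mul_inv]
          ring
        rw [hsub, det_mul_row_col,
          Fin.prod_univ_eq_prod_range (fun i => (x i + y n)⁻¹) n,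
          Fin.prod_univ_eq_prod_range (fun j => (y n - y j)) n, one_mul]
      · intro j _ hj
        have : K L j = 0 := by simp [hK, hG, hj]
        simp [this]
      · simp
    -- Assemble
    rw [step1, step2, step3, ih (fun i j hi hj => h i j (by omega) (by omega))]
    -- products bookkeeping
    rw [Finset.prod_inv_distrib, Finset.prod_inv_distrib]  -- may fail; try
    have hNum : (∏ j ∈ Finset.range (n+1), ∏ i ∈ Finset.range j, ((x j - x i) * (y j - y i)))
        = (∏ j ∈ Finset.range n, ∏ i ∈ Finset.range j, ((x j - x i) * (y j - y i))) *
          ∏ i ∈ Finset.range n, ((x n - x i) * (y n - y i)) := Finset.prod_range_succ _ n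
    have hDen : (∏ i ∈ Finset.range (n+1), ∏ j ∈ Finset.range (n+1), (x i + y j))
        = ((∏ i ∈ Finset.range n, ∏ j ∈ Finset.range n, (x i + y j)) *
            ∏ i ∈ Finset.range n, (x i + y n)) * ∏ j ∈ Finset.range (n+1), (x n + y j) := by
      rw [Finset.prod_range_succ, ← Finset.prod_mul_distrib]
      congr 1
      exact Finset.prod_congr rfl fun i _ => Finset.prod_range_succ _ n
    rw [hNum, hDen]
    have h1 : (∏ j ∈ Finset.range (n+1), (x n + y j)) ≠ 0 :=
      Finset.prod_ne_zero_iff.mpr fun j hj => h n j (by omega) (by simpa using hj)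
    have h2 : (∏ i ∈ Finset.range n, (x i + y n)) ≠ 0 :=
      Finset.prod_ne_zero_iff.mpr fun i hi => h i n (by simp at hi; omega) (by omega)
    have h3 : (∏ i ∈ Finset.range n, ∏ j ∈ Finset.range n, (x i + y j)) ≠ 0 :=
      Finset.prod_ne_zero_iff.mpr fun i hi => Finset.prod_ne_zero_iff.mpr fun j hj =>
        h i j (by simp at hi; omega) (by simp at hj; omega)
    rw [Finset.prod_mul_distrib]
    field_simp

lemma bernoulli_coeff_self (n : ℕ) : (Polynomial.bernoulli n).coeff n = 1 := by
  rw [Polynomial.bernoulli, Polynomial.finset_sum_coeff, Finset.sum_eq_single 0]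
  · simp
  · intro i hi h0
    rw [Polynomial.coeff_monomial, if_neg]
    rw [Finset.mem_range] at hi
    omega
  · simp

lemma bernoulli_natDegree_le (n : ℕ) : (Polynomial.bernoulli n).natDegree ≤ n :=
  Polynomial.natDegree_sum_le_of_forall_le _ _ fun i _ =>
    (Polynomial.natDegree_monomial_le _).trans (Nat.sub_le _ _)

lemma bernoulli_monic (n : ℕ) : (Polynomial.bernoulli n).Monic :=
  Polynomial.monic_of_natDegree_le_of_coeff_eq_one n (bernoulli_natDegree_le n)
    (bernoulli_coeff_self n)

lemma bernoulli_natDegree (n : ℕ) : (Polynomial.bernoulli n).natDegree = n :=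
  le_antisymm (bernoulli_natDegree_le n)
    (Polynomial.le_natDegree_of_ne_zero (by rw [bernoulli_coeff_self]; exact one_ne_zero))


section coeffdet
variable (r : ℕ)

lemma perm_sum (σ : Equiv.Perm (Fin r)) : ∑ i : Fin r, ((σ i : ℕ) + 1 + (i : ℕ)) = r ^ 2 := by
  have h1 : ∑ i : Fin r, ((σ i : ℕ) + 1 + (i : ℕ))
      = (∑ i : Fin r, (σ i : ℕ)) + (∑ i : Fin r, 1) + ∑ i : Fin r, (i : ℕ) := by
    rw [← Finset.sum_add_distrib, ← Finset.sum_add_distrib]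
  have h2 : ∑ i : Fin r, (σ i : ℕ) = ∑ i : Fin r, (i : ℕ) :=
    Equiv.sum_comp σ (fun i => (i : ℕ))
  have h3 : ∑ i : Fin r, (i : ℕ) = ∑ i ∈ Finset.range r, i :=
    Fin.sum_univ_eq_sum_range (fun i => i) r
  have h4 := Finset.sum_range_id_mul_two r
  rw [h1, h2, h3]
  simp only [Finset.sum_const, Finset.card_univ, Fintype.card_fin, smul_eq_mul, mul_one]
  cases r with
  | zero => simp
  | succ m =>
    have h5 : (m+1) * m + (m+1) = (m+1)^2 := by ring
    simp only [Nat.succ_sub_one] at h4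
    omega

lemma Fone_entry_ne (n m : Fin r) :
    ((((n : ℕ) + 1 + (m : ℕ) : ℕ) : ℚ)) ≠ 0 := by
  simp only [Ne, Nat.cast_eq_zero]
  omega

lemma Fone_natDegree_le : (Fone r).natDegree ≤ r ^ 2 := by
  rw [Fone, Matrix.det_apply]
  apply Polynomial.natDegree_sum_le_of_forall_le
  intro σ _
  rw [Units.smul_def, zsmul_eq_mul, ← Polynomial.C_eq_intCast]
  refine (Polynomial.natDegree_mul_le).trans ?_
  rw [Polynomial.natDegree_C, zero_add]
  refine (Polynomial.natDegree_prod_le _ _).trans ?_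
  rw [← perm_sum r σ]
  apply Finset.sum_le_sum
  intro i _
  refine (Polynomial.natDegree_mul_le).trans ?_
  exact (Nat.add_le_add (Polynomial.natDegree_C _).le (bernoulli_natDegree_le _)).trans
    (le_of_eq (zero_add _))

lemma Fone_coeff : (Fone r).coeff (r ^ 2) =
    Matrix.det (Matrix.of fun (n m : Fin r) => (((n : ℕ) + 1 + (m : ℕ) : ℕ) : ℚ)⁻¹) := by
  rw [Fone, Matrix.det_apply, Matrix.det_apply, Polynomial.finset_sum_coeff]
  refine Finset.sum_congr rfl fun σ _ => ?_
  rw [Units.smul_def, Units.smul_def, zsmul_eq_mul, zsmul_eq_mul, ← Polynomial.C_eq_intCast,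
    Polynomial.coeff_C_mul]
  congr 1
  have hne : ∀ i : Fin r, (Matrix.of fun (n m : Fin r) =>
      Polynomial.C ((((n : ℕ) + 1 + (m : ℕ) : ℕ) : ℚ))⁻¹ *
        Polynomial.bernoulli ((n : ℕ) + 1 + (m : ℕ))) (σ i) i ≠ 0 := by
    intro i
    simp only [Matrix.of_apply]
    refine mul_ne_zero ?_ (bernoulli_monic _).ne_zero
    rw [Ne, Polynomial.C_eq_zero, inv_eq_zero]
    exact Fone_entry_ne r (σ i) i
  have hdeg : (∏ i : Fin r, (Matrix.of fun (n m : Fin r) =>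
      Polynomial.C ((((n : ℕ) + 1 + (m : ℕ) : ℕ) : ℚ))⁻¹ *
        Polynomial.bernoulli ((n : ℕ) + 1 + (m : ℕ))) (σ i) i).natDegree = r ^ 2 := by
    rw [Polynomial.natDegree_prod _ _ fun i _ => hne i]
    rw [← perm_sum r σ]
    refine Finset.sum_congr rfl fun i _ => ?_
    simp only [Matrix.of_apply]
    rw [Polynomial.natDegree_C_mul, bernoulli_natDegree]
    rw [Ne, inv_eq_zero]
    exact Fone_entry_ne r (σ i) i
  have : (∏ i : Fin r, (Matrix.of fun (n m : Fin r) =>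
      Polynomial.C ((((n : ℕ) + 1 + (m : ℕ) : ℕ) : ℚ))⁻¹ *
        Polynomial.bernoulli ((n : ℕ) + 1 + (m : ℕ))) (σ i) i).coeff (r^2)
      = (∏ i : Fin r, (Matrix.of fun (n m : Fin r) =>
      Polynomial.C ((((n : ℕ) + 1 + (m : ℕ) : ℕ) : ℚ))⁻¹ *
        Polynomial.bernoulli ((n : ℕ) + 1 + (m : ℕ))) (σ i) i).leadingCoeff := by
    rw [Polynomial.leadingCoeff, hdeg]
  rw [this, Polynomial.leadingCoeff_prod]
  refine Finset.prod_congr rfl fun i _ => ?_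
  simp only [Matrix.of_apply]
  rw [Polynomial.leadingCoeff_mul, Polynomial.leadingCoeff_C, (bernoulli_monic _).leadingCoeff,
    mul_one]

end coeffdet


lemma prod_sub_eq_factorial (j : ℕ) : ∏ i ∈ Finset.range j, ((j:ℚ) - i) = (j ! : ℚ) := by
  have h : ∏ i ∈ Finset.range j, ((j:ℚ) - i) = ((∏ i ∈ Finset.range j, (j - i) : ℕ) : ℚ) := by
    rw [Nat.cast_prod]
    refine Finset.prod_congr rfl fun i hi => ?_
    rw [Finset.mem_range] at hi
    rw [Nat.cast_sub hi.le]
  rw [h, ← Nat.descFactorial_eq_prod_range, Nat.descFactorial_self]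

lemma fact_den (i : ℕ) : ∀ m : ℕ, i ! * ∏ j ∈ Finset.range m, (i+1+j) = (i+m)! := by
  intro m
  induction m with
  | zero => simp
  | succ m ih =>
    rw [Finset.prod_range_succ, ← mul_assoc, ih, ← Nat.add_assoc, Nat.factorial_succ]
    ring_nf

lemma cauchy_value (r : ℕ) :
    Matrix.det (Matrix.of fun (n m : Fin r) => (((n : ℕ) + 1 + (m : ℕ) : ℕ) : ℚ)⁻¹)
      = (∏ i ∈ Finset.range r, (i ! : ℚ)) ^ 3 / ∏ i ∈ Finset.range r, ((r + i)! : ℚ) := by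
  have hx : ∀ i j : ℕ, i < r → j < r → ((fun i : ℕ => (i:ℚ)+1) i + (fun j : ℕ => (j:ℚ)) j) ≠ 0 := by
    intro i j _ _
    simp only
    positivity
  have hcd := cauchy_det (fun i => (i:ℚ)+1) (fun j => (j:ℚ)) r hx
  have hm : (Matrix.of fun (n m : Fin r) => (((n : ℕ) + 1 + (m : ℕ) : ℕ) : ℚ)⁻¹)
      = Matrix.of fun (n m : Fin r) => ((((n:ℕ):ℚ)+1) + ((m:ℕ):ℚ))⁻¹ := by
    ext n m
    simp only [Matrix.of_apply]
    congr 1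
    push_cast
    ring
  rw [hm, hcd]
  have hnum : (∏ j ∈ Finset.range r, ∏ i ∈ Finset.range j,
        ((((j:ℚ)+1) - ((i:ℚ)+1)) * ((j:ℚ) - (i:ℚ))))
      = (∏ i ∈ Finset.range r, (i ! : ℚ))^2 := by
    rw [← Finset.prod_pow]
    refine Finset.prod_congr rfl fun j _ => ?_
    calc ∏ i ∈ Finset.range j, ((((j:ℚ)+1) - ((i:ℚ)+1)) * ((j:ℚ) - (i:ℚ)))
        = ∏ i ∈ Finset.range j, ((j:ℚ) - i)^2 :=
          Finset.prod_congr rfl fun i _ => by ring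
      _ = (∏ i ∈ Finset.range j, ((j:ℚ) - i))^2 := by rw [Finset.prod_pow]
      _ = ((j ! : ℚ))^2 := by rw [prod_sub_eq_factorial]
  have hDq : (∏ i ∈ Finset.range r, (i ! : ℚ)) *
      (∏ i ∈ Finset.range r, ∏ j ∈ Finset.range r, (((i:ℚ)+1) + j))
      = ∏ i ∈ Finset.range r, ((r + i)! : ℚ) := by
    rw [← Finset.prod_mul_distrib]
    refine Finset.prod_congr rfl fun i _ => ?_
    have h1 : (∏ j ∈ Finset.range r, (((i:ℚ)+1) + j))
        = ((∏ j ∈ Finset.range r, (i+1+j) : ℕ) : ℚ) := by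
      rw [Nat.cast_prod]
      refine Finset.prod_congr rfl fun j _ => by push_cast; ring
    rw [h1, ← Nat.cast_mul, fact_den, Nat.add_comm r i]
  have hone : (0:ℚ) < ∏ i ∈ Finset.range r, (i ! : ℚ) :=
    Finset.prod_pos fun i _ => by exact_mod_cast Nat.factorial_pos i
  have htwo : (0:ℚ) < ∏ i ∈ Finset.range r, ((r + i)! : ℚ) :=
    Finset.prod_pos fun i _ => by exact_mod_cast Nat.factorial_pos (r + i)
  have hDqpos : (0:ℚ) < ∏ i ∈ Finset.range r, ∏ j ∈ Finset.range r, (((i:ℚ)+1) + j) :=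
    Finset.prod_pos fun i _ => Finset.prod_pos fun j _ => by positivity
  rw [hnum, div_eq_div_iff (ne_of_gt hDqpos) (ne_of_gt htwo), ← hDq]
  ring

end Aux

/-- For every r ≥ 1, `F_{r,1}(x)` has degree `r²` and its leading
coefficient equals `[1!·2!⋯(r−1)!]³ / (r!·(r+1)!⋯(2r−1)!)`. -/
theorem Fone_natDegree_leadingCoeff (r : ℕ) (hr : 1 ≤ r) :
    (Fone r).natDegree = r ^ 2 ∧
      (Fone r).leadingCoeff =
        (∏ i ∈ Finset.range r, (i ! : ℚ)) ^ 3 / ∏ i ∈ Finset.range r, ((r + i)! : ℚ) := by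
  have hcoeff : (Fone r).coeff (r ^ 2) =
      (∏ i ∈ Finset.range r, (i ! : ℚ)) ^ 3 / ∏ i ∈ Finset.range r, ((r + i)! : ℚ) := by
    rw [Fone_coeff, cauchy_value]
  have hone : (0:ℚ) < ∏ i ∈ Finset.range r, (i ! : ℚ) :=
    Finset.prod_pos fun i _ => by exact_mod_cast Nat.factorial_pos i
  have htwo : (0:ℚ) < ∏ i ∈ Finset.range r, ((r + i)! : ℚ) :=
    Finset.prod_pos fun i _ => by exact_mod_cast Nat.factorial_pos (r + i)
  have hT : ((∏ i ∈ Finset.range r, (i ! : ℚ)) ^ 3 /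
      ∏ i ∈ Finset.range r, ((r + i)! : ℚ)) ≠ 0 :=
    ne_of_gt (div_pos (pow_pos hone 3) htwo)
  have hdeg : (Fone r).natDegree = r ^ 2 :=
    le_antisymm (Fone_natDegree_le r)
      (Polynomial.le_natDegree_of_ne_zero (by rw [hcoeff]; exact hT))
  exact ⟨hdeg, by rw [Polynomial.leadingCoeff, hdeg, hcoeff]⟩
end

section
/- For every integer D ≥ 1, if G ∈ ℚ[x_1,…,x_D] satisfies F_{1,D}(x_1,…,x_D) = ∏_{1≤i<j≤D}(x_j−x_i) · G(x_1,…,x_D), then the homogeneous component of G of top degree D equals (1/D!)·x_1 x_2 ⋯ x_D. -/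
open Nat Finset

/-- `F_{r,D}(x_1,…,x_D)`: the determinant of the rD×rD matrix whose rows are indexed
(in lexicographic order) by pairs `(i,j)`, corresponding to `n = i·D + j + 1 ∈ {1,…,rD}`,
and whose columns are indexed by pairs `(m,v)` with `0 ≤ m ≤ r−1`, `1 ≤ v ≤ D`
(ordered lexicographically), with `(n,(m,v))` entry `B_{n+m}(x_v)/(n+m)`. -/
noncomputable def Fpoly (r D : ℕ) : MvPolynomial (Fin D) ℚ :=
  Matrix.det (Matrix.of fun (p q : Fin r × Fin D) =>
    MvPolynomial.C ((((p.1 : ℕ) * D + (p.2 : ℕ) + 1 + (q.1 : ℕ) : ℕ) : ℚ))⁻¹ *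
      Polynomial.aeval (MvPolynomial.X q.2)
        (Polynomial.bernoulli ((p.1 : ℕ) * D + (p.2 : ℕ) + 1 + (q.1 : ℕ))))

/-- The Vandermonde product `∏_{1 ≤ i < j ≤ D} (x_j − x_i)`. -/
noncomputable def vand (D : ℕ) : MvPolynomial (Fin D) ℚ :=
  ∏ p ∈ Finset.univ.filter (fun p : Fin D × Fin D => p.1 < p.2),
    (MvPolynomial.X p.2 - MvPolynomial.X p.1)

/-- The rD×rD matrix with rows `n = 1,…,rD` (encoded as pairs `(i,j)`, `n = i·D+j+1`,
in lexicographic order), columns indexed by pairs `(m,v)`, `0 ≤ m ≤ r−1`, `1 ≤ v ≤ D`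
(`v` encoded as `q.2 + 1`), and `(n,(m,v))` entry `D^{n+m−1}·B_{n+m}(v/D)/(n+m)`. -/
noncomputable def deltaMat (r D : ℕ) : Matrix (Fin r × Fin D) (Fin r × Fin D) ℚ :=
  Matrix.of fun p q =>
    (D : ℚ) ^ ((p.1 : ℕ) * D + (p.2 : ℕ) + (q.1 : ℕ)) *
      (Polynomial.bernoulli ((p.1 : ℕ) * D + (p.2 : ℕ) + 1 + (q.1 : ℕ))).eval
        (((q.2 : ℕ) + 1 : ℚ) / D) /
      (((p.1 : ℕ) * D + (p.2 : ℕ) + 1 + (q.1 : ℕ) : ℕ) : ℚ)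

/-- `Δ_{r,D}`. -/
noncomputable def delta (r D : ℕ) : ℚ := (deltaMat r D).det

namespace TopHomAux

open MvPolynomial

/-- Homogeneous component of a product with a homogeneous left factor. -/
lemma homogComp_mul {σ : Type*} {p : MvPolynomial σ ℚ} {m : ℕ}
    (hp : p.IsHomogeneous m) (q : MvPolynomial σ ℚ) (n : ℕ) :
    homogeneousComponent (m + n) (p * q) = p * homogeneousComponent n q := by
  conv_lhs => rw [← sum_homogeneousComponent q, Finset.mul_sum]
  rw [map_sum]
  have key : ∀ i : ℕ,
      homogeneousComponent (m + n) (p * homogeneousComponent i q) =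
        if n = i then p * homogeneousComponent i q else 0 := by
    intro i
    rw [homogeneousComponent_of_mem
      ((MvPolynomial.mem_homogeneousSubmodule _ _).mpr
        (hp.mul (homogeneousComponent_isHomogeneous i q)))]
    simp only [Nat.add_left_cancel_iff]
  simp_rw [key, Finset.sum_ite_eq]
  by_cases h : n ∈ Finset.range (q.totalDegree + 1)
  · rw [if_pos h]
  · rw [if_neg h, homogeneousComponent_eq_zero _ q (by simp at h; omega), mul_zero]

/-- The non-leading part of the Bernoulli polynomial evaluated at `X j` has small degree. -/
lemma bern_low {D : ℕ} (n : ℕ) (j : Fin D) :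
    ((Polynomial.aeval (X j : MvPolynomial (Fin D) ℚ)) (Polynomial.bernoulli (n + 1))
      - X j ^ (n + 1)).totalDegree ≤ n := by
  have hsum : (Polynomial.aeval (X j : MvPolynomial (Fin D) ℚ)) (Polynomial.bernoulli (n + 1)) =
      ∑ i ∈ range (n + 2),
        C (_root_.bernoulli i * ((n + 1).choose i : ℚ)) * X j ^ (n + 1 - i) := by
    rw [Polynomial.bernoulli, map_sum]
    refine Finset.sum_congr rfl fun i _ => ?_
    simp [Polynomial.aeval_monomial, algebraMap_eq]
  rw [hsum, Finset.sum_range_succ']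
  have h0 : C (_root_.bernoulli 0 * ((n + 1).choose 0 : ℚ)) *
      (X j : MvPolynomial (Fin D) ℚ) ^ (n + 1 - 0) = X j ^ (n + 1) := by
    simp
  rw [h0, add_sub_cancel_right]
  refine le_trans (totalDegree_finset_sum _ _) (Finset.sup_le fun i _ => ?_)
  refine le_trans (totalDegree_mul _ _) ?_
  rw [totalDegree_C, zero_add, totalDegree_X_pow]
  omega

end TopHomAux

/-- For D ≥ 1, if `F_{1,D} = ∏_{i<j}(x_j−x_i) · G`, then the homogeneous
component of G of top degree D equals `(1/D!)·x_1⋯x_D`. -/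
theorem top_homogeneous_component_of_G (D : ℕ) (hD : 1 ≤ D) (G : MvPolynomial (Fin D) ℚ)
    (hG : Fpoly 1 D = vand D * G) :
    MvPolynomial.homogeneousComponent D G =
      MvPolynomial.C ((D ! : ℚ))⁻¹ * ∏ i : Fin D, MvPolynomial.X i := by
  classical
  open MvPolynomial in
  set c : ℕ := ∑ i : Fin D, (i : ℕ) with hc
  set N : ℕ := ∑ i : Fin D, ((i : ℕ) + 1) with hN
  have hNc : N = c + D := by
    simp [hN, hc, Finset.sum_add_distrib, Finset.card_univ]
  -- vand as iterated product
  have hvand_eq : vand D = ∏ i : Fin D, ∏ j ∈ Ioi i, (X j - X i : MvPolynomial (Fin D) ℚ) := by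
    rw [vand, Finset.prod_sigma' univ (fun i => Ioi i)
      (fun i j => (X j - X i : MvPolynomial (Fin D) ℚ))]
    refine (Finset.prod_nbij' (fun p : Fin D × Fin D => (⟨p.1, p.2⟩ : Σ _ : Fin D, Fin D))
      (fun x => (x.1, x.2)) ?_ ?_ ?_ ?_ ?_).symm.symm
    · intro a ha; simp only [Finset.mem_filter] at ha
      simpa [Finset.mem_sigma] using ha.2
    · intro a ha; simp only [Finset.mem_sigma, Finset.mem_Ioi] at ha
      simp [ha]
    · intro a _; rfl
    · intro a _; rfl
    · intro a _; rfl
  -- vand is homogeneous of degree c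
  have hvand_hom : (vand D).IsHomogeneous c := by
    have h1 : (vand D).IsHomogeneous (∑ i : Fin D, ∑ _j ∈ Ioi i, 1) := by
      rw [hvand_eq]
      exact MvPolynomial.IsHomogeneous.prod _ _ _ fun i _ =>
        MvPolynomial.IsHomogeneous.prod _ _ _ fun j _ =>
          (isHomogeneous_X _ _).sub (isHomogeneous_X _ _)
    have h2 : (∑ i : Fin D, ∑ _j ∈ Ioi i, 1) = c := by
      have e1 : (∑ i : Fin D, ∑ _j ∈ Ioi i, 1) = ∑ i : Fin D, (D - 1 - (i : ℕ)) := by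
        refine Finset.sum_congr rfl fun i _ => ?_
        rw [Finset.sum_const, smul_eq_mul, mul_one, Fin.card_Ioi]
      rw [e1, hc, Fin.sum_univ_eq_sum_range (fun i => D - 1 - i),
        Finset.sum_range_reflect (fun i => i) D, Fin.sum_univ_eq_sum_range (fun i => i)]
    rwa [h2] at h1
  -- vand is nonzero
  have hv0 : vand D ≠ 0 := by
    rw [vand]
    refine Finset.prod_ne_zero_iff.mpr fun p hp => ?_
    rw [Finset.mem_filter] at hp
    exact sub_ne_zero_of_ne fun h => absurd (MvPolynomial.X_injective h) (ne_of_gt hp.2)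
  -- the matrices
  set M : Matrix (Fin D) (Fin D) (MvPolynomial (Fin D) ℚ) :=
    Matrix.of fun i j => C ((((i : ℕ) + 1 : ℕ) : ℚ))⁻¹ *
      Polynomial.aeval (X j) (Polynomial.bernoulli ((i : ℕ) + 1)) with hM
  set T : Matrix (Fin D) (Fin D) (MvPolynomial (Fin D) ℚ) :=
    Matrix.of fun i j => C ((((i : ℕ) + 1 : ℕ) : ℚ))⁻¹ * X j ^ ((i : ℕ) + 1) with hT
  -- Fpoly 1 D is det M
  have hF : Fpoly 1 D = M.det := by
    rw [Fpoly, ← Matrix.det_submatrix_equiv_self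
      (⟨fun j => ((0 : Fin 1), j), Prod.snd, fun _ => rfl,
        fun p => Prod.ext (Subsingleton.elim _ _) rfl⟩ : Fin D ≃ Fin 1 × Fin D)]
    congr 1
    ext i j
    simp [hM, Matrix.submatrix]
  have hT_hom : ∀ i j : Fin D, (T i j).IsHomogeneous ((i : ℕ) + 1) := fun i j =>
    MvPolynomial.isHomogeneous_C_mul_X_pow _ _ _
  have hL : ∀ i j : Fin D, (M i j - T i j).totalDegree ≤ (i : ℕ) := by
    intro i j
    have e : M i j - T i j = C ((((i : ℕ) + 1 : ℕ) : ℚ))⁻¹ *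
        ((Polynomial.aeval (X j : MvPolynomial (Fin D) ℚ))
          (Polynomial.bernoulli ((i : ℕ) + 1)) - X j ^ ((i : ℕ) + 1)) := by
      simp [hM, hT, mul_sub]
    rw [e]
    refine le_trans (totalDegree_mul _ _) ?_
    rw [totalDegree_C, zero_add]
    exact TopHomAux.bern_low _ _
  -- main determinant computation
  have hdet : homogeneousComponent N M.det = T.det := by
    rw [Matrix.det_apply', Matrix.det_apply', map_sum]
    refine Finset.sum_congr rfl fun σ _ => ?_
    have hsgn : (((Equiv.Perm.sign σ : ℤ) : MvPolynomial (Fin D) ℚ))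
        = C (((Equiv.Perm.sign σ : ℤ) : ℚ)) := by
      rw [map_intCast (C : ℚ →+* MvPolynomial (Fin D) ℚ)]
    rw [hsgn, homogeneousComponent_C_mul]
    congr 1
    have hsum : ∑ i : Fin D, ((σ i : ℕ) + 1) = N := by
      rw [hN]; exact Equiv.sum_comp σ (fun i : Fin D => (i : ℕ) + 1)
    have hsumc : ∑ i : Fin D, (σ i : ℕ) = c := by
      rw [hc]; exact Equiv.sum_comp σ (fun i : Fin D => (i : ℕ))
    have hsplit : ∏ i : Fin D, M (σ i) i
        = ∑ t ∈ (univ : Finset (Fin D)).powerset,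
            (∏ i ∈ t, T (σ i) i) * ∏ i ∈ univ \ t, (M (σ i) i - T (σ i) i) := by
      rw [← Finset.prod_add]
      exact Finset.prod_congr rfl fun i _ => by ring
    rw [hsplit, map_sum, Finset.sum_eq_single univ]
    · rw [Finset.sdiff_self, Finset.prod_empty, mul_one]
      have hhom : (∏ i : Fin D, T (σ i) i).IsHomogeneous N := by
        rw [← hsum]
        exact MvPolynomial.IsHomogeneous.prod _ _ _ fun i _ => hT_hom _ _
      rw [homogeneousComponent_of_mem
        ((MvPolynomial.mem_homogeneousSubmodule _ _).mpr hhom), if_pos rfl]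
    · intro t ht hne
      apply homogeneousComponent_eq_zero
      have h1 : (∏ i ∈ t, T (σ i) i).totalDegree ≤ ∑ i ∈ t, ((σ i : ℕ) + 1) :=
        le_trans (totalDegree_finset_prod _ _)
          (Finset.sum_le_sum fun i _ => (hT_hom _ _).totalDegree_le)
      have h2 : (∏ i ∈ univ \ t, (M (σ i) i - T (σ i) i)).totalDegree
          ≤ ∑ i ∈ univ \ t, (σ i : ℕ) :=
        le_trans (totalDegree_finset_prod _ _)
          (Finset.sum_le_sum fun i _ => hL _ _)
      have ht' : t ⊆ univ := Finset.mem_powerset.mp ht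
      have hcard : t.card < D := by
        have := Finset.card_lt_card (Finset.ssubset_iff_subset_ne.mpr ⟨ht', hne⟩)
        simpa using this
      have hparts : ∑ i ∈ univ \ t, (σ i : ℕ) + ∑ i ∈ t, (σ i : ℕ) = c := by
        rw [Finset.sum_sdiff ht', hsumc]
      have haddone : ∑ i ∈ t, ((σ i : ℕ) + 1) = ∑ i ∈ t, (σ i : ℕ) + t.card := by
        rw [Finset.sum_add_distrib, Finset.sum_const, smul_eq_mul, mul_one]
      calc ((∏ i ∈ t, T (σ i) i) * ∏ i ∈ univ \ t, (M (σ i) i - T (σ i) i)).totalDegree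
          ≤ (∏ i ∈ t, T (σ i) i).totalDegree
            + (∏ i ∈ univ \ t, (M (σ i) i - T (σ i) i)).totalDegree :=
            totalDegree_mul _ _
        _ ≤ ∑ i ∈ t, ((σ i : ℕ) + 1) + ∑ i ∈ univ \ t, (σ i : ℕ) := Nat.add_le_add h1 h2
        _ < N := by rw [hNc]; omega
    · intro h
      exact absurd (Finset.mem_powerset.mpr (Finset.Subset.refl _)) h
  -- compute det T
  have hdetT : T.det = C ((D ! : ℚ))⁻¹ * ((∏ i : Fin D, X i) * vand D) := by
    have e1 : T = Matrix.of fun i j =>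
        (fun k : Fin D => (C ((((k : ℕ) + 1 : ℕ) : ℚ))⁻¹ : MvPolynomial (Fin D) ℚ)) i *
          (Matrix.of fun i j : Fin D =>
            (X j : MvPolynomial (Fin D) ℚ) ^ ((i : ℕ) + 1)) i j := rfl
    rw [e1, Matrix.det_mul_column]
    have e2 : (Matrix.of fun i j : Fin D => (X j : MvPolynomial (Fin D) ℚ) ^ ((i : ℕ) + 1))
        = Matrix.of fun i j =>
            (fun k : Fin D => (X k : MvPolynomial (Fin D) ℚ)) j *
              ((Matrix.vandermonde fun k : Fin D => (X k : MvPolynomial (Fin D) ℚ)).transpose) i j := by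
      ext i j
      simp [Matrix.vandermonde_apply, pow_succ, mul_comm]
    rw [e2, Matrix.det_mul_row, Matrix.det_transpose, Matrix.det_vandermonde, ← hvand_eq]
    have hcoef : (∏ i : Fin D, (C ((((i : ℕ) + 1 : ℕ) : ℚ))⁻¹ : MvPolynomial (Fin D) ℚ))
        = C ((D ! : ℚ))⁻¹ := by
      rw [← map_prod, Finset.prod_inv_distrib]
      congr 2
      rw [← Nat.cast_prod, Fin.prod_univ_eq_prod_range (fun i => i + 1),
        Finset.prod_range_add_one_eq_factorial]
    rw [hcoef]
  -- assemble
  have key : vand D * homogeneousComponent D G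
      = vand D * (C ((D ! : ℚ))⁻¹ * ∏ i : Fin D, X i) := by
    have h1 : homogeneousComponent N (Fpoly 1 D) = vand D * homogeneousComponent D G := by
      rw [hG, hNc]
      exact TopHomAux.homogComp_mul hvand_hom G D
    rw [← h1, hF, hdet, hdetT]
    ring
  exact mul_left_cancel₀ hv0 key
end

section
/- For every integer D ≥ 1, if G ∈ ℚ[x_1,…,x_D] satisfies F_{1,D}(x_1,…,x_D) = ∏_{1≤i<j≤D}(x_j−x_i) · G(x_1,…,x_D), then the constant term of G satisfies G(0,0,…,0) = (−1)^D/(D+1)!. -/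
open Nat Finset

section Aux
open Polynomial

lemma prod_filter_lt' {M : Type*} [CommMonoid M] {D : ℕ} (f : Fin D → Fin D → M) :
    ∏ p ∈ Finset.univ.filter (fun p : Fin D × Fin D => p.1 < p.2), f p.1 p.2
      = ∏ i : Fin D, ∏ j ∈ Finset.Ioi i, f i j := by
  rw [Finset.prod_sigma']
  refine Finset.prod_bij' (fun p _ => (⟨p.1, p.2⟩ : (_ : Fin D) × Fin D))
    (fun x _ => (x.1, x.2)) ?_ ?_ ?_ ?_ ?_ <;>
    simp [Finset.mem_sigma, Finset.mem_Ioi]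

lemma sum_filter_lt' {M : Type*} [AddCommMonoid M] {D : ℕ} (f : Fin D → Fin D → M) :
    ∑ p ∈ Finset.univ.filter (fun p : Fin D × Fin D => p.1 < p.2), f p.1 p.2
      = ∑ i : Fin D, ∑ j ∈ Finset.Ioi i, f i j := by
  rw [Finset.sum_sigma']
  refine Finset.sum_bij' (fun p _ => (⟨p.1, p.2⟩ : (_ : Fin D) × Fin D))
    (fun x _ => (x.1, x.2)) ?_ ?_ ?_ ?_ ?_ <;>
    simp [Finset.mem_sigma, Finset.mem_Ioi]

lemma card_filter_lt' (D : ℕ) :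
    (Finset.univ.filter (fun p : Fin D × Fin D => p.1 < p.2)).card = ∑ i : Fin D, (i : ℕ) := by
  rw [Finset.card_eq_sum_ones, sum_filter_lt' (fun _ _ => 1)]
  simp only [Finset.sum_const, smul_eq_mul, mul_one, Fin.card_Ioi]
  rw [Fin.sum_univ_eq_sum_range (fun i => D - 1 - i), Fin.sum_univ_eq_sum_range (fun i => i)]
  exact Finset.sum_range_reflect id D

lemma bern_sum' (n : ℕ) :
    ∑ j ∈ Finset.range (n + 1), (((n + 2).choose (j + 1) : ℚ)) • Polynomial.bernoulli (j + 1)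
      = ((n : ℚ) + 2) • (Polynomial.X : ℚ[X]) ^ (n + 1) - 1 := by
  have h := Polynomial.sum_bernoulli (n + 1)
  rw [Finset.sum_range_succ'] at h
  simp only [Polynomial.bernoulli_zero, Nat.choose_zero_right, Nat.cast_one, one_smul] at h
  rw [smul_X_eq_monomial]
  have h' : ((n : ℚ) + 2) = ((n + 1 : ℕ) + 1 : ℚ) := by push_cast; ring
  rw [h']
  exact eq_sub_of_add_eq h

/-- the substitution `x_v ↦ (v+1)·T` -/
noncomputable def phiCT (D : ℕ) : MvPolynomial (Fin D) ℚ →ₐ[ℚ] Polynomial ℚ :=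
  MvPolynomial.aeval (fun v : Fin D => Polynomial.C ((v : ℚ) + 1) * Polynomial.X)

noncomputable def MmatCT (D : ℕ) : Matrix (Fin D) (Fin D) (Polynomial ℚ) :=
  Matrix.of fun n v => Polynomial.C ((((n : ℕ) + 1 : ℕ) : ℚ))⁻¹ *
    Polynomial.aeval (Polynomial.C ((v : ℚ) + 1) * Polynomial.X)
      (Polynomial.bernoulli ((n : ℕ) + 1))

noncomputable def LmatCT (D : ℕ) : Matrix (Fin D) (Fin D) (Polynomial ℚ) :=
  Matrix.of fun n k =>
    if (k : ℕ) ≤ (n : ℕ) then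
      Polynomial.C ((((k : ℕ) + 1) * (((n : ℕ) + 2).choose ((k : ℕ) + 1)) : ℕ) / (((n : ℕ) : ℚ) + 2))
    else 0

noncomputable def WmatCT (D : ℕ) : Matrix (Fin D) (Fin D) (Polynomial ℚ) :=
  Matrix.of fun n v =>
    (Polynomial.C ((v : ℚ) + 1) * Polynomial.X) ^ ((n : ℕ) + 1) -
      Polynomial.C ((((n : ℕ) : ℚ) + 2))⁻¹

lemma phiCT_Fpoly (D : ℕ) : phiCT D (Fpoly 1 D) = (MmatCT D).det := by
  rw [Fpoly, AlgHom.map_det]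
  let e : Fin D ≃ Fin 1 × Fin D :=
    ⟨fun v => (0, v), fun p => p.2, fun v => rfl, fun p => by
      ext <;> simp [Subsingleton.elim (0 : Fin 1) p.1]⟩
  rw [← Matrix.det_submatrix_equiv_self e]
  congr 1
  apply Matrix.ext
  intro n v
  simp only [Matrix.submatrix_apply, AlgHom.mapMatrix_apply, Matrix.map_apply, Matrix.of_apply,
    e, Equiv.coe_fn_mk]
  rw [map_mul, ← Polynomial.aeval_algHom_apply]
  simp [phiCT, MmatCT]

lemma LM_eq_W (D : ℕ) : LmatCT D * MmatCT D = WmatCT D := by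
  apply Matrix.ext
  intro n v
  rw [Matrix.mul_apply]
  set y : ℚ[X] := Polynomial.C ((v : ℚ) + 1) * Polynomial.X with hy
  set g : ℕ → ℚ[X] := fun k =>
    if k ≤ (n : ℕ) then
      ((((n : ℕ) + 2).choose (k + 1) : ℚ) / (((n : ℕ) : ℚ) + 2)) •
        Polynomial.aeval y (Polynomial.bernoulli (k + 1))
    else 0 with hg
  have hstep : ∀ k : Fin D, LmatCT D n k * MmatCT D k v = g (k : ℕ) := by
    intro k
    by_cases hkn : (k : ℕ) ≤ (n : ℕ)
    · simp only [LmatCT, MmatCT, Matrix.of_apply, if_pos hkn, hg]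
      rw [Polynomial.smul_eq_C_mul]
      push_cast
      rw [← mul_assoc, ← Polynomial.C_mul]
      congr 2
      have h1 : ((k : ℚ) + 1) ≠ 0 := by positivity
      field_simp
    · simp only [LmatCT, Matrix.of_apply, if_neg hkn, hg, zero_mul]
  rw [Finset.sum_congr rfl (fun k _ => hstep k), Fin.sum_univ_eq_sum_range]
  have hsub : ∑ k ∈ Finset.range D, g k = ∑ k ∈ Finset.range ((n : ℕ) + 1), g k := by
    refine (Finset.sum_subset (Finset.range_subset_range.mpr n.isLt) ?_).symm
    intro x _ hx
    rw [Finset.mem_range, not_lt] at hx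
    exact if_neg (by omega)
  rw [hsub]
  have hpos : (((n : ℕ) : ℚ) + 2) ≠ 0 := by positivity
  have hsumg : ∑ k ∈ Finset.range ((n : ℕ) + 1), g k
      = ((((n : ℕ) : ℚ) + 2))⁻¹ •
          ∑ k ∈ Finset.range ((n : ℕ) + 1),
            ((((n : ℕ) + 2).choose (k + 1) : ℚ)) • Polynomial.aeval y (Polynomial.bernoulli (k + 1)) := by
    rw [Finset.smul_sum]
    refine Finset.sum_congr rfl fun k hk => ?_
    rw [Finset.mem_range] at hk
    rw [hg]
    simp only [if_pos (Nat.lt_succ_iff.mp hk)]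
    rw [smul_smul, div_eq_inv_mul]
  rw [hsumg]
  have haev : ∑ k ∈ Finset.range ((n : ℕ) + 1),
      ((((n : ℕ) + 2).choose (k + 1) : ℚ)) • Polynomial.aeval y (Polynomial.bernoulli (k + 1))
      = (((n : ℕ) : ℚ) + 2) • y ^ ((n : ℕ) + 1) - 1 := by
    have h := congrArg (Polynomial.aeval y) (bern_sum' (n : ℕ))
    rw [map_sum] at h
    simpa using h
  rw [haev, smul_sub, inv_smul_smul₀ hpos]
  simp only [WmatCT, Matrix.of_apply, ← hy]
  congr 1
  rw [Polynomial.smul_eq_C_mul, mul_one]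

lemma detL_CT (D : ℕ) : (LmatCT D).det = Polynomial.C ((D ! : ℕ) : ℚ) := by
  rw [Matrix.det_of_lowerTriangular (LmatCT D) (by
    intro i j hij
    exact if_neg (by exact_mod_cast Nat.not_le.mpr hij))]
  have hdiag : ∀ n : Fin D, LmatCT D n n = Polynomial.C (((n : ℕ) : ℚ) + 1) := by
    intro n
    simp only [LmatCT, Matrix.of_apply, if_pos le_rfl]
    congr 1
    have hch : (((n : ℕ) + 2).choose ((n : ℕ) + 1)) = (n : ℕ) + 2 := by
      rw [show (n : ℕ) + 2 = ((n : ℕ) + 1) + 1 from rfl, Nat.choose_succ_self_right]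
    rw [hch]
    have : (((n : ℕ) : ℚ) + 2) ≠ 0 := by positivity
    push_cast
    field_simp
  rw [Finset.prod_congr rfl (fun n _ => hdiag n)]
  rw [← map_prod]
  congr 1
  rw [Fin.prod_univ_eq_prod_range (fun i => ((i : ℚ) + 1))]
  rw [← Finset.prod_range_add_one_eq_factorial]
  push_cast
  rfl

noncomputable def Urow (D : ℕ) : Fin D → Fin D → ℚ[X] := fun n v =>
  (Polynomial.C ((v : ℚ) + 1) * Polynomial.X) ^ ((n : ℕ) + 1)

noncomputable def Vrow (D : ℕ) : Fin D → Fin D → ℚ[X] := fun n _ =>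
  -Polynomial.C ((((n : ℕ) : ℚ) + 2))⁻¹

lemma det_piecewise_two {D : ℕ} (s : Finset (Fin D)) (a b : Fin D) (hab : a ≠ b)
    (ha : a ∉ s) (hb : b ∉ s) :
    Matrix.detRowAlternating (s.piecewise (Urow D) (Vrow D)) = 0 := by
  classical
  set f := (Matrix.detRowAlternating : (Fin D → ℚ[X]) [⋀^Fin D]→ₗ[ℚ[X]] ℚ[X])
  set m := s.piecewise (Urow D) (Vrow D) with hm
  have hma : m a = (-Polynomial.C ((((a : ℕ) : ℚ) + 2))⁻¹) • (fun _ => (1 : ℚ[X])) := by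
    funext v
    simp [hm, Finset.piecewise_eq_of_notMem _ _ _ ha, Vrow, Pi.smul_apply, smul_eq_mul, mul_one]
  have h1 : f m = f (Function.update m a ((-Polynomial.C ((((a : ℕ) : ℚ) + 2))⁻¹) •
      (fun _ => (1 : ℚ[X])))) := by rw [← hma, Function.update_eq_self]
  rw [h1, AlternatingMap.map_update_smul]
  set m' := Function.update m a (fun _ => (1 : ℚ[X])) with hm'
  have hmb : m' b = (-Polynomial.C ((((b : ℕ) : ℚ) + 2))⁻¹) • (fun _ => (1 : ℚ[X])) := by
    rw [hm', Function.update_of_ne hab.symm]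
    funext v
    simp [hm, Finset.piecewise_eq_of_notMem _ _ _ hb, Vrow, Pi.smul_apply, smul_eq_mul, mul_one]
  have h2 : f m' = f (Function.update m' b ((-Polynomial.C ((((b : ℕ) : ℚ) + 2))⁻¹) •
      (fun _ => (1 : ℚ[X])))) := by rw [← hmb, Function.update_eq_self]
  rw [h2, AlternatingMap.map_update_smul]
  have hz : f (Function.update m' b (fun _ => (1 : ℚ[X]))) = 0 := by
    apply AlternatingMap.map_eq_zero_of_eq _ _ _ hab
    rw [Function.update_of_ne hab, hm', Function.update_self, Function.update_self]
  rw [hz, smul_zero, smul_zero]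

lemma det_piecewise_one {D : ℕ} (n₀ : Fin D) :
    Matrix.detRowAlternating (({n₀}ᶜ : Finset (Fin D)).piecewise (Urow D) (Vrow D))
      = -(Polynomial.C ((((n₀ : ℕ) : ℚ) + 2))⁻¹ *
          Polynomial.X ^ (∑ i ∈ Finset.univ.erase n₀, ((i : ℕ) + 1)) *
          Polynomial.C (Matrix.det (Matrix.of fun i j : Fin D =>
            if i = n₀ then (1 : ℚ) else ((j : ℚ) + 1) ^ ((i : ℕ) + 1)))) := by
  classical
  set w : Fin D → ℚ[X] := fun i =>
    if i = n₀ then -Polynomial.C ((((n₀ : ℕ) : ℚ) + 2))⁻¹ else Polynomial.X ^ ((i : ℕ) + 1)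
    with hw
  set A₀ : Matrix (Fin D) (Fin D) ℚ := Matrix.of fun i j =>
    if i = n₀ then (1 : ℚ) else ((j : ℚ) + 1) ^ ((i : ℕ) + 1) with hA₀
  have hmat : ({n₀}ᶜ : Finset (Fin D)).piecewise (Urow D) (Vrow D)
      = Matrix.of fun i j => w i * (A₀.map Polynomial.C) i j := by
    funext i v
    by_cases hi : i = n₀
    · subst hi
      have hni : i ∉ ({i}ᶜ : Finset (Fin D)) := by simp
      simp [Finset.piecewise_eq_of_notMem _ _ _ hni, Vrow, hw, hA₀]
    · have hmem : i ∈ ({n₀}ᶜ : Finset (Fin D)) := by simpa using hi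
      simp only [Finset.piecewise_eq_of_mem _ _ _ hmem, Urow, hw, hA₀, if_neg hi,
        Matrix.of_apply, Matrix.map_apply]
      rw [mul_pow, ← Polynomial.C_pow]
      ring
  rw [hmat]
  rw [show Matrix.detRowAlternating (Matrix.of fun i j => w i * (A₀.map Polynomial.C) i j)
      = Matrix.det (Matrix.of fun i j => w i * (A₀.map Polynomial.C) i j) from rfl]
  rw [Matrix.det_mul_column w]
  have hprod : ∏ i, w i = -(Polynomial.C ((((n₀ : ℕ) : ℚ) + 2))⁻¹ *
      Polynomial.X ^ (∑ i ∈ Finset.univ.erase n₀, ((i : ℕ) + 1))) := by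
    rw [← Finset.mul_prod_erase Finset.univ w (Finset.mem_univ n₀)]
    have hw1 : w n₀ = -Polynomial.C ((((n₀ : ℕ) : ℚ) + 2))⁻¹ := if_pos rfl
    rw [hw1]
    rw [Finset.prod_congr rfl (fun i hi => if_neg (Finset.ne_of_mem_erase hi))]
    rw [Finset.prod_pow_eq_pow_sum]
    ring
  have hC : (A₀.map (Polynomial.C : ℚ → ℚ[X])).det = Polynomial.C A₀.det := by
    rw [(Polynomial.C : ℚ →+* ℚ[X]).map_det A₀, RingHom.mapMatrix_apply]
  rw [hprod, hC]
  ring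

lemma det_piecewise_univ {D : ℕ} :
    Matrix.detRowAlternating ((Finset.univ : Finset (Fin D)).piecewise (Urow D) (Vrow D))
      = Polynomial.X ^ (∑ i : Fin D, ((i : ℕ) + 1)) *
          Polynomial.C (Matrix.det (Matrix.of fun i j : Fin D =>
            ((j : ℚ) + 1) ^ ((i : ℕ) + 1))) := by
  classical
  rw [Finset.piecewise_univ]
  set A₀ : Matrix (Fin D) (Fin D) ℚ := Matrix.of fun i j => ((j : ℚ) + 1) ^ ((i : ℕ) + 1)
  have hmat : Urow D = Matrix.of fun i j =>
      (fun i : Fin D => (Polynomial.X : ℚ[X]) ^ ((i : ℕ) + 1)) i * (A₀.map Polynomial.C) i j := by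
    funext i v
    simp only [Urow, Matrix.of_apply, Matrix.map_apply, A₀]
    rw [mul_pow, ← Polynomial.C_pow]
    ring
  rw [hmat]
  rw [show Matrix.detRowAlternating (Matrix.of fun i j =>
      (fun i : Fin D => (Polynomial.X : ℚ[X]) ^ ((i : ℕ) + 1)) i * (A₀.map Polynomial.C) i j)
      = Matrix.det _ from rfl]
  rw [Matrix.det_mul_column]
  rw [Finset.prod_pow_eq_pow_sum]
  have hC : (A₀.map (Polynomial.C : ℚ → ℚ[X])).det = Polynomial.C A₀.det := by
    rw [(Polynomial.C : ℚ →+* ℚ[X]).map_det A₀, RingHom.mapMatrix_apply]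
  rw [hC]

lemma detA0_last (d : ℕ) :
    Matrix.det (Matrix.of fun i j : Fin (d + 1) =>
        if i = Fin.last d then (1 : ℚ) else ((j : ℚ) + 1) ^ ((i : ℕ) + 1))
      = (-1) ^ d * ∏ i : Fin (d + 1), ∏ j ∈ Finset.Ioi i, (((j : ℚ) + 1) - ((i : ℚ) + 1)) := by
  classical
  set w : Fin (d + 1) → ℚ := fun j => (j : ℚ) + 1
  have hmat : (Matrix.of fun i j : Fin (d + 1) =>
      if i = Fin.last d then (1 : ℚ) else ((j : ℚ) + 1) ^ ((i : ℕ) + 1))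
      = ((Matrix.vandermonde w).transpose).submatrix (finRotate (d + 1)) id := by
    apply Matrix.ext
    intro i j
    simp only [Matrix.of_apply, Matrix.submatrix_apply, Matrix.transpose_apply,
      Matrix.vandermonde, id, Matrix.of_apply]
    rw [finRotate_succ_apply, Fin.val_add_one]
    by_cases hi : i = Fin.last d
    · simp [hi]
    · simp [hi, w]
  rw [hmat, Matrix.det_permute, Matrix.det_transpose, Matrix.det_vandermonde, sign_finRotate]
  norm_num [w]

end Aux

open Polynomial in
/-- For D ≥ 1, if `F_{1,D} = ∏_{i<j}(x_j−x_i) · G`, then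
`G(0,…,0) = (−1)^D/(D+1)!`. -/
theorem constant_term_of_G (D : ℕ) (hD : 1 ≤ D) (G : MvPolynomial (Fin D) ℚ)
    (hG : Fpoly 1 D = vand D * G) :
    MvPolynomial.eval (fun _ : Fin D => (0 : ℚ)) G = (-1 : ℚ) ^ D / ((D + 1)! : ℚ) := by
  classical
  obtain ⟨d, rfl⟩ : ∃ d, D = d + 1 := ⟨D - 1, (Nat.succ_pred_eq_of_pos hD).symm⟩
  set N : ℕ := ∑ i : Fin (d + 1), (i : ℕ) with hN
  set c : ℚ := ∏ i : Fin (d + 1), ∏ j ∈ Finset.Ioi i, (((j : ℚ) + 1) - ((i : ℚ) + 1)) with hc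
  have hc0 : 0 < c := by
    rw [hc]
    refine Finset.prod_pos fun i _ => Finset.prod_pos fun j hj => ?_
    have hij : i < j := Finset.mem_Ioi.mp hj
    have hij2 : ((i : ℕ) : ℚ) < ((j : ℕ) : ℚ) := by exact_mod_cast Fin.lt_def.mp hij
    linarith
  -- image of vand
  have hvand : phiCT (d + 1) (vand (d + 1)) = Polynomial.C c * Polynomial.X ^ N := by
    rw [vand, map_prod]
    have hfac : ∀ p ∈ Finset.univ.filter (fun p : Fin (d + 1) × Fin (d + 1) => p.1 < p.2),
        phiCT (d + 1) (MvPolynomial.X p.2 - MvPolynomial.X p.1)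
          = Polynomial.C (((p.2 : ℚ) + 1) - ((p.1 : ℚ) + 1)) * Polynomial.X := by
      intro p _
      rw [map_sub]
      simp only [phiCT, MvPolynomial.aeval_X]
      rw [Polynomial.C_sub]
      ring
    rw [Finset.prod_congr rfl hfac, Finset.prod_mul_distrib, Finset.prod_const, ← map_prod]
    rw [prod_filter_lt' (fun i j => ((j : ℚ) + 1) - ((i : ℚ) + 1)), ← hc, card_filter_lt', ← hN]
  -- the sum of all i+1
  have hsum1 : ∑ i : Fin (d + 1), ((i : ℕ) + 1) = N + (d + 1) := by
    rw [Finset.sum_add_distrib]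
    simp [hN]
  -- expansion of det W
  have hdetWsum : (WmatCT (d + 1)).det
      = ∑ s : Finset (Fin (d + 1)),
          Matrix.detRowAlternating (s.piecewise (Urow (d + 1)) (Vrow (d + 1))) := by
    have hadd : Urow (d + 1) + Vrow (d + 1) = (WmatCT (d + 1) : Matrix _ _ ℚ[X]) := by
      funext n v
      simp only [Pi.add_apply, Urow, Vrow, WmatCT, Matrix.of_apply]
      ring
    have h := (Matrix.detRowAlternating :
        (Fin (d + 1) → ℚ[X]) [⋀^Fin (d + 1)]→ₗ[ℚ[X]] ℚ[X]).toMultilinearMap.map_add_univ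
        (Urow (d + 1)) (Vrow (d + 1))
    rw [show (WmatCT (d + 1)).det = Matrix.detRowAlternating (WmatCT (d + 1)) from rfl, ← hadd]
    simpa using h
  -- coefficient of the expansion
  set s₀ : Finset (Fin (d + 1)) := ({Fin.last d} : Finset (Fin (d + 1)))ᶜ with hs₀
  have hcoeffW : ((WmatCT (d + 1)).det).coeff N = -(((d : ℚ) + 2))⁻¹ * ((-1) ^ d * c) := by
    rw [hdetWsum, Polynomial.finset_sum_coeff]
    rw [Finset.sum_eq_single_of_mem s₀ (Finset.mem_univ _)]
    · -- main term
      rw [hs₀, det_piecewise_one (Fin.last d)]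
      have hK : ∑ i ∈ Finset.univ.erase (Fin.last d), ((i : ℕ) + 1) = N := by
        have h1 := Finset.add_sum_erase Finset.univ (fun i : Fin (d + 1) => (i : ℕ) + 1)
          (Finset.mem_univ (Fin.last d))
        rw [hsum1, Fin.val_last] at h1
        omega
      rw [hK, detA0_last, ← hc]
      have hre0 : Polynomial.C ((((Fin.last d : ℕ) : ℚ) + 2))⁻¹ * Polynomial.X ^ N *
            Polynomial.C ((-1) ^ d * c)
          = Polynomial.C (((((Fin.last d : ℕ) : ℚ) + 2))⁻¹ * ((-1) ^ d * c)) * Polynomial.X ^ N := by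
        simp only [Polynomial.C_mul]
        ring
      rw [hre0, Polynomial.coeff_neg, Polynomial.coeff_C_mul, Polynomial.coeff_X_pow, if_pos rfl,
        mul_one, Fin.val_last]
      ring
    · -- all other terms vanish
      intro s _ hne
      by_cases h2 : 2 ≤ sᶜ.card
      · obtain ⟨a, ha, b, hb, hab⟩ := Finset.one_lt_card.mp h2
        rw [det_piecewise_two s a b hab (Finset.mem_compl.mp ha) (Finset.mem_compl.mp hb)]
        simp
      · have hcase : sᶜ.card = 0 ∨ sᶜ.card = 1 := by omega
        rcases hcase with hcase | hcase
        · have hsu : s = Finset.univ :=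
            (Finset.compl_eq_empty_iff s).mp (Finset.card_eq_zero.mp hcase)
          subst hsu
          rw [det_piecewise_univ, hsum1, mul_comm, Polynomial.coeff_C_mul,
            Polynomial.coeff_X_pow, if_neg (by omega), mul_zero]
        · obtain ⟨n₀, hn₀⟩ := Finset.card_eq_one.mp hcase
          have hs : s = ({n₀} : Finset (Fin (d + 1)))ᶜ := by
            rw [← compl_compl s, hn₀]
          have hn0last : n₀ ≠ Fin.last d := by
            intro h
            exact hne (by rw [hs, h, hs₀])
          rw [hs, det_piecewise_one n₀]
          set K : ℕ := ∑ i ∈ Finset.univ.erase n₀, ((i : ℕ) + 1) with hK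
          have hKne : K ≠ N := by
            have h1 := Finset.add_sum_erase Finset.univ (fun i : Fin (d + 1) => (i : ℕ) + 1)
              (Finset.mem_univ n₀)
            rw [hsum1] at h1
            have h2 : (n₀ : ℕ) < d := Fin.val_lt_last hn0last
            rw [hK]
            omega
          have hre : Polynomial.C ((((n₀ : ℕ) : ℚ) + 2))⁻¹ * Polynomial.X ^ K *
                Polynomial.C (Matrix.det (Matrix.of fun i j : Fin (d + 1) =>
                  if i = n₀ then (1 : ℚ) else ((j : ℚ) + 1) ^ ((i : ℕ) + 1)))
              = Polynomial.C (((((n₀ : ℕ) : ℚ) + 2))⁻¹ * Matrix.det (Matrix.of fun i j : Fin (d + 1) =>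
                  if i = n₀ then (1 : ℚ) else ((j : ℚ) + 1) ^ ((i : ℕ) + 1))) * Polynomial.X ^ K := by
            simp only [Polynomial.C_mul]
            ring
          rw [hre, Polynomial.coeff_neg, Polynomial.coeff_C_mul, Polynomial.coeff_X_pow,
            if_neg (Ne.symm hKne)]
          simp
  -- left-hand side chain
  have hdetW : (WmatCT (d + 1)).det
      = Polynomial.C (((d + 1)! : ℕ) : ℚ) * (MmatCT (d + 1)).det := by
    rw [← detL_CT, ← Matrix.det_mul, LM_eq_W]
  have hev : Polynomial.eval 0 (phiCT (d + 1) G)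
      = MvPolynomial.eval (fun _ : Fin (d + 1) => (0 : ℚ)) G := by
    have hcomp : (Polynomial.aeval (0 : ℚ)).comp (phiCT (d + 1))
        = MvPolynomial.aeval (fun _ : Fin (d + 1) => (0 : ℚ)) := by
      apply MvPolynomial.algHom_ext
      intro i
      simp [phiCT]
    have h1 : Polynomial.aeval (0 : ℚ) (phiCT (d + 1) G)
        = MvPolynomial.aeval (fun _ : Fin (d + 1) => (0 : ℚ)) G := by
      rw [← hcomp]; rfl
    rw [← Polynomial.coe_aeval_eq_eval, h1]
    rfl
  have hL : ((WmatCT (d + 1)).det).coeff N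
      = (((d + 1)! : ℕ) : ℚ) * (c * MvPolynomial.eval (fun _ : Fin (d + 1) => (0 : ℚ)) G) := by
    rw [hdetW, Polynomial.coeff_C_mul, ← phiCT_Fpoly, hG, map_mul, hvand]
    congr 1
    rw [mul_assoc, Polynomial.coeff_C_mul]
    congr 1
    rw [mul_comm, Polynomial.coeff_mul_X_pow']
    rw [if_pos le_rfl, Nat.sub_self, Polynomial.coeff_zero_eq_eval_zero, hev]
  -- conclude
  have key : (((d + 1)! : ℕ) : ℚ) * (c * MvPolynomial.eval (fun _ : Fin (d + 1) => (0 : ℚ)) G)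
      = -(((d : ℚ) + 2))⁻¹ * ((-1) ^ d * c) := by rw [← hL, hcoeffW]
  have hd2 : ((d : ℚ) + 2) ≠ 0 := by positivity
  have key2 : (((d + 1)! : ℕ) : ℚ) * (c * MvPolynomial.eval (fun _ : Fin (d + 1) => (0 : ℚ)) G)
      * ((d : ℚ) + 2) = -((-1) ^ d * c) := by
    rw [key]
    field_simp
  have hfacne : (((d + 1 + 1)! : ℕ) : ℚ) ≠ 0 := by
    exact Nat.cast_ne_zero.mpr (Nat.factorial_ne_zero _)
  have hfaccast : (((d + 1 + 1)! : ℕ) : ℚ) = ((d : ℚ) + 2) * (((d + 1)! : ℕ) : ℚ) := by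
    rw [Nat.factorial_succ]
    push_cast
    ring
  rw [eq_div_iff hfacne]
  apply mul_left_cancel₀ hc0.ne'
  rw [hfaccast]
  linear_combination key2
end

section
/- For every integer D ≥ 1, one has the polynomial identity F_{1,D}(x_1,…,x_D) = (1/D!) · ∏_{1≤i<j≤D}(x_j−x_i) · Σ_{t=0}^{D} (−1)^t E_{D,D−t}(x_1,…,x_D)/(t+1), where E_{D,k} denotes the k-th elementary symmetric polynomial in x_1,…,x_D (with E_{D,0} = 1). -/
open Nat Finset

section Aux
variable {M : Type*} [CommMonoid M]

lemma prod_Ioi_eq_prod_filter {n : ℕ} (f : Fin n → Fin n → M) :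
    ∏ i : Fin n, ∏ j ∈ Finset.Ioi i, f i j
      = ∏ p ∈ Finset.univ.filter (fun p : Fin n × Fin n => p.1 < p.2), f p.1 p.2 := by
  have h : ∀ i : Fin n, Finset.Ioi i = Finset.univ.filter (fun j => i < j) := by
    intro i; ext j; simp
  rw [Finset.prod_filter, Fintype.prod_prod_type]
  exact Finset.prod_congr rfl fun i _ => by rw [h i, Finset.prod_filter]

lemma filter_pairs_split {D : ℕ} (g : Fin (D+1) × Fin (D+1) → M) :
    ∏ p ∈ Finset.univ.filter (fun p : Fin (D+1) × Fin (D+1) => p.1 < p.2), g p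
      = (∏ p ∈ Finset.univ.filter (fun p : Fin D × Fin D => p.1 < p.2),
          g (p.1.castSucc, p.2.castSucc))
        * ∏ i : Fin D, g (i.castSucc, Fin.last D) := by
  rw [← Finset.prod_filter_mul_prod_filter_not
      (Finset.univ.filter (fun p : Fin (D+1) × Fin (D+1) => p.1 < p.2))
      (fun p => p.2 ≠ Fin.last D)]
  congr 1
  · refine (Finset.prod_bij' (fun p hp => ((p.1.castSucc, p.2.castSucc) : Fin (D+1) × Fin (D+1)))
      (fun p hp => (p.1.castPred ?_, p.2.castPred ?_)) ?_ ?_ ?_ ?_ ?_).symm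
    · simp only [Finset.mem_filter, Finset.mem_univ, true_and] at hp
      exact Fin.ne_last_of_lt (Fin.lt_of_lt_of_le hp.1 (Fin.le_last _))
    · simp only [Finset.mem_filter, Finset.mem_univ, true_and] at hp
      exact hp.2
    · intro p hp
      simp only [Finset.mem_filter, Finset.mem_univ, true_and] at hp ⊢
      exact ⟨Fin.castSucc_lt_castSucc_iff.mpr hp, Fin.ne_last_of_lt (Fin.castSucc_lt_last _)⟩
    · intro p hp
      simp only [Finset.mem_filter, Finset.mem_univ, true_and] at hp ⊢
      simpa [Fin.castPred_lt_castPred_iff] using hp.1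
    · intro p hp; simp
    · intro p hp; simp
    · intro p hp; rfl
  · refine (Finset.prod_bij' (fun i _ => ((i.castSucc, Fin.last D) : Fin (D+1) × Fin (D+1)))
      (fun p hp => p.1.castPred ?_) ?_ ?_ ?_ ?_ ?_).symm
    · simp only [Finset.mem_filter, Finset.mem_univ, true_and, not_not] at hp
      exact Fin.ne_last_of_lt hp.1
    · intro i _
      simp [Fin.castSucc_lt_last]
    · intro p hp; simp
    · intro i _; simp
    · intro p hp
      simp only [Finset.mem_filter, Finset.mem_univ, true_and, not_not] at hp
      ext <;> simp [hp.2]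
    · intro i _; rfl

end Aux

namespace FoneAux
open MvPolynomial

variable (D : ℕ)

noncomputable def Nmat (j : Fin (D+1)) : Matrix (Fin D) (Fin D) (MvPolynomial (Fin D) ℚ) :=
  Matrix.of fun k l => (MvPolynomial.X k : MvPolynomial (Fin D) ℚ) ^ ((j.succAbove l : Fin (D+1)) : ℕ)

noncomputable def wfun : Fin (D+1) → Polynomial (MvPolynomial (Fin D) ℚ) :=
  Fin.snoc (fun i => Polynomial.C (MvPolynomial.X i)) Polynomial.X

lemma det_vand_snoc :
    (Matrix.vandermonde (wfun D)).det
      = Polynomial.C (vand D) * ∏ i : Fin D, (Polynomial.X - Polynomial.C (MvPolynomial.X i)) := by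
  rw [Matrix.det_vandermonde, prod_Ioi_eq_prod_filter (fun i j => wfun D j - wfun D i),
    filter_pairs_split (fun p => wfun D p.2 - wfun D p.1)]
  congr 1
  · rw [vand, map_prod]
    exact Finset.prod_congr rfl fun p _ => by simp [wfun, Fin.snoc_castSucc]
  · exact Finset.prod_congr rfl fun i _ => by simp [wfun, Fin.snoc_castSucc, Fin.snoc_last]

lemma det_vand_expand :
    (Matrix.vandermonde (wfun D)).det
      = ∑ j : Fin (D+1), Polynomial.C ((-1 : MvPolynomial (Fin D) ℚ) ^ (D + (j : ℕ)) * (Nmat D j).det)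
          * Polynomial.X ^ (j : ℕ) := by
  rw [Matrix.det_succ_row _ (Fin.last D)]
  refine Finset.sum_congr rfl fun j _ => ?_
  have h1 : (Matrix.vandermonde (wfun D)).submatrix (Fin.last D).succAbove j.succAbove
      = (Polynomial.C : MvPolynomial (Fin D) ℚ →+* _).mapMatrix (Nmat D j) := by
    ext k l
    simp [Matrix.vandermonde, wfun, Fin.succAbove_last, Fin.snoc_castSucc, Nmat, map_pow]
  rw [h1, ← RingHom.map_det]
  have h2 : Matrix.vandermonde (wfun D) (Fin.last D) j = Polynomial.X ^ (j : ℕ) := by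
    simp [Matrix.vandermonde, wfun, Fin.snoc_last]
  rw [h2]
  have h3 : ((-1 : Polynomial (MvPolynomial (Fin D) ℚ)) ^ ((Fin.last D : ℕ) + (j : ℕ)))
      = Polynomial.C ((-1 : MvPolynomial (Fin D) ℚ) ^ (D + (j : ℕ))) := by
    simp [Fin.val_last]
  rw [h3, map_mul]; ring

lemma det_Nmat (j : Fin (D+1)) :
    (Nmat D j).det = vand D * MvPolynomial.esymm (Fin D) ℚ (D - (j : ℕ)) := by
  have key := (det_vand_expand D).symm.trans (det_vand_snoc D)
  have hco := congrArg (fun q => Polynomial.coeff q (j : ℕ)) key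
  simp only [Polynomial.finset_sum_coeff, Polynomial.coeff_C_mul, Polynomial.coeff_X_pow] at hco
  -- LHS collapses
  rw [Finset.sum_eq_single j (fun b _ hb => by
      rw [if_neg (by simpa [Fin.val_eq_val] using (Ne.symm hb)), mul_zero])
    (fun h => absurd (Finset.mem_univ j) h)] at hco
  rw [if_pos rfl, mul_one] at hco
  -- RHS: coefficient of the product
  have hP : (∏ i : Fin D, (Polynomial.X - Polynomial.C (MvPolynomial.X i : MvPolynomial (Fin D) ℚ))).coeff (j : ℕ)
      = (-1 : MvPolynomial (Fin D) ℚ) ^ (D - (j : ℕ)) * MvPolynomial.esymm (Fin D) ℚ (D - (j : ℕ)) := by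
    have hs : (∏ i : Fin D, (Polynomial.X - Polynomial.C (MvPolynomial.X i : MvPolynomial (Fin D) ℚ)))
        = ((Finset.univ.val.map (fun i : Fin D => (MvPolynomial.X i : MvPolynomial (Fin D) ℚ))).map
            (fun t => Polynomial.X - Polynomial.C t)).prod := by
      rw [Multiset.map_map, Finset.prod_eq_multiset_prod]
      rfl
    have hcard : Multiset.card (Finset.univ.val.map (fun i : Fin D => (MvPolynomial.X i : MvPolynomial (Fin D) ℚ))) = D := by
      simp
    rw [hs, Multiset.prod_X_sub_C_coeff _ (by rw [hcard]; omega), hcard,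
      MvPolynomial.esymm_eq_multiset_esymm]
  rw [hP] at hco
  have hsign : (-1 : MvPolynomial (Fin D) ℚ) ^ (D + (j : ℕ)) * ((-1 : MvPolynomial (Fin D) ℚ) ^ (D + (j : ℕ))) = 1 := by
    rw [← pow_add, ← two_mul, pow_mul]; norm_num
  calc (Nmat D j).det = ((-1 : MvPolynomial (Fin D) ℚ) ^ (D + (j : ℕ)) * (-1) ^ (D + (j : ℕ))) * (Nmat D j).det := by
        rw [hsign, one_mul]
    _ = (-1 : MvPolynomial (Fin D) ℚ) ^ (D + (j : ℕ)) * (vand D * ((-1) ^ (D - (j : ℕ)) * MvPolynomial.esymm (Fin D) ℚ (D - (j : ℕ)))) := by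
        rw [mul_assoc, hco]
    _ = ((-1 : MvPolynomial (Fin D) ℚ) ^ (D + (j : ℕ)) * (-1) ^ (D - (j : ℕ))) * (vand D * MvPolynomial.esymm (Fin D) ℚ (D - (j : ℕ))) := by
        ring
    _ = vand D * MvPolynomial.esymm (Fin D) ℚ (D - (j : ℕ)) := by
        rw [← pow_add]
        have hj : (j : ℕ) ≤ D := by omega
        have : D + (j : ℕ) + (D - (j : ℕ)) = 2 * D := by omega
        rw [this, pow_mul]; norm_num

noncomputable def Mmat : Matrix (Fin D) (Fin D) (MvPolynomial (Fin D) ℚ) :=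
  Matrix.of fun n v => (MvPolynomial.X v : MvPolynomial (Fin D) ℚ) ^ ((n : ℕ) + 1)
    - MvPolynomial.C (((n : ℕ) + 2 : ℚ))⁻¹

noncomputable def Bmat : Matrix (Fin (D+1)) (Fin (D+1)) (MvPolynomial (Fin D) ℚ) :=
  Matrix.of fun i => Fin.snoc (fun v => (MvPolynomial.X v : MvPolynomial (Fin D) ℚ) ^ (i : ℕ))
    (MvPolynomial.C (((i : ℕ) + 1 : ℚ))⁻¹)

noncomputable def B0mat : Matrix (Fin (D+1)) (Fin (D+1)) (MvPolynomial (Fin D) ℚ) :=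
  Matrix.of fun i => Fin.snoc
    (fun v => if i = 0 then 1 else (MvPolynomial.X v : MvPolynomial (Fin D) ℚ) ^ (i : ℕ)
      - MvPolynomial.C (((i : ℕ) + 1 : ℚ))⁻¹)
    (if i = 0 then 1 else 0)

noncomputable def Emat : Matrix (Fin (D+1)) (Fin (D+1)) (MvPolynomial (Fin D) ℚ) :=
  Matrix.of fun i j => if j = 0 then MvPolynomial.C (((i : ℕ) + 1 : ℚ))⁻¹
    else (if i = j then 1 else 0)

lemma Emat_mul_B0 : Emat D * B0mat D = Bmat D := by
  refine Matrix.ext fun i k => ?_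
  rw [Matrix.mul_apply, Fin.sum_univ_succ]
  have h0 : Emat D i 0 = MvPolynomial.C (((i : ℕ) + 1 : ℚ))⁻¹ := by simp [Emat]
  have hs : ∀ j : Fin D, Emat D i j.succ = if i = j.succ then 1 else 0 := by
    intro j; simp [Emat, (Fin.succ_ne_zero j)]
  simp only [h0, hs]
  rcases Fin.eq_zero_or_eq_succ i with hi | ⟨i', hi⟩
  · subst hi
    have : ∀ j : Fin D, (if (0 : Fin (D+1)) = j.succ then (1 : MvPolynomial (Fin D) ℚ) else 0) * B0mat D j.succ k = 0 := by
      intro j; rw [if_neg (Fin.succ_ne_zero j).symm, zero_mul]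
    simp only [this, Finset.sum_const_zero, add_zero]
    simp only [Fin.val_zero, Nat.cast_zero, zero_add, inv_one, map_one, one_mul]
    refine Fin.lastCases ?_ (fun v => ?_) k
    · simp [B0mat, Bmat, Fin.snoc_last]
    · simp [B0mat, Bmat, Fin.snoc_castSucc]
  · subst hi
    rw [Finset.sum_eq_single i' (fun b _ hb => by
        rw [if_neg (fun h => hb (Fin.succ_injective _ h.symm)), zero_mul])
      (fun h => absurd (Finset.mem_univ i') h)]
    rw [if_pos rfl, one_mul]
    refine Fin.lastCases ?_ (fun v => ?_) k
    · simp [B0mat, Bmat, Fin.snoc_last, (Fin.succ_ne_zero i')]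
    · have e0 : B0mat D 0 (Fin.castSucc v) = 1 := by simp [B0mat, Fin.snoc_castSucc]
      have e1 : B0mat D i'.succ (Fin.castSucc v)
          = MvPolynomial.X v ^ ((i'.succ : Fin (D+1)) : ℕ)
            - MvPolynomial.C ((((i'.succ : Fin (D+1)) : ℕ) : ℚ) + 1)⁻¹ := by
        simp [B0mat, Fin.snoc_castSucc, Fin.succ_ne_zero i']
      have e2 : Bmat D i'.succ (Fin.castSucc v)
          = MvPolynomial.X v ^ ((i'.succ : Fin (D+1)) : ℕ) := by
        simp [Bmat, Fin.snoc_castSucc]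
      rw [e0, e1, e2]
      ring

lemma det_Emat : (Emat D).det = 1 := by
  have h : (Emat D).BlockTriangular OrderDual.toDual := by
    intro i j hij
    have hij' : i < j := hij
    have hj0 : j ≠ 0 := by
      intro h; subst h; exact absurd hij' (by simp [Fin.not_lt_zero])
    simp [Emat, hj0, (Fin.ne_of_lt hij')]
  rw [Matrix.det_of_lowerTriangular _ h]
  refine Finset.prod_eq_one fun i _ => ?_
  rcases eq_or_ne i 0 with hi | hi
  · subst hi; simp [Emat]
  · simp [Emat, hi]

lemma det_B0 : (B0mat D).det = (-1 : MvPolynomial (Fin D) ℚ) ^ D * (Mmat D).det := by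
  rw [Matrix.det_succ_column _ (Fin.last D)]
  rw [Finset.sum_eq_single 0 (fun b _ hb => by
      have : B0mat D b (Fin.last D) = 0 := by simp [B0mat, Fin.snoc_last, hb]
      rw [this, mul_zero, zero_mul])
    (fun h => absurd (Finset.mem_univ _) h)]
  have h1 : B0mat D 0 (Fin.last D) = 1 := by simp [B0mat, Fin.snoc_last]
  have h2 : (B0mat D).submatrix (Fin.succAbove 0) (Fin.last D).succAbove = Mmat D := by
    refine Matrix.ext fun n v => ?_
    simp only [Matrix.submatrix_apply, Fin.succAbove_zero, Fin.succAbove_last, B0mat, Mmat,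
      Matrix.of_apply, Fin.snoc_castSucc, if_neg (Fin.succ_ne_zero n)]
    have : ((n.succ : Fin (D+1)) : ℕ) = (n : ℕ) + 1 := rfl
    rw [this]
    push_cast
    ring_nf
  rw [h1, h2]
  simp [pow_add]

lemma det_B : (Bmat D).det
    = ∑ i : Fin (D+1), (-1 : MvPolynomial (Fin D) ℚ) ^ ((i : ℕ) + D)
        * MvPolynomial.C (((i : ℕ) + 1 : ℚ))⁻¹ * (vand D * MvPolynomial.esymm (Fin D) ℚ (D - (i : ℕ))) := by
  rw [Matrix.det_succ_column _ (Fin.last D)]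
  refine Finset.sum_congr rfl fun i _ => ?_
  have h1 : Bmat D i (Fin.last D) = MvPolynomial.C (((i : ℕ) + 1 : ℚ))⁻¹ := by
    simp [Bmat, Fin.snoc_last]
  have h2 : (Bmat D).submatrix i.succAbove (Fin.last D).succAbove = Matrix.transpose (Nmat D i) := by
    refine Matrix.ext fun k l => ?_
    show Bmat D (i.succAbove k) ((Fin.last D).succAbove l) = Nmat D i l k
    simp [Bmat, Nmat, Fin.succAbove_last, Fin.snoc_castSucc]
  rw [h1, h2, Matrix.det_transpose, det_Nmat]
  simp [Fin.val_last]

lemma det_Mmat : (Mmat D).det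
    = vand D * ∑ t ∈ Finset.range (D + 1),
        MvPolynomial.C ((-1 : ℚ) ^ t * ((t : ℚ) + 1)⁻¹) * MvPolynomial.esymm (Fin D) ℚ (D - t) := by
  have hB : (Bmat D).det = (B0mat D).det := by
    rw [← Emat_mul_B0, Matrix.det_mul, det_Emat, one_mul]
  have hM : (Mmat D).det = (-1 : MvPolynomial (Fin D) ℚ) ^ D * (Bmat D).det := by
    rw [hB, det_B0]
    rw [← mul_assoc, ← pow_add, ← two_mul, pow_mul]
    norm_num
  rw [hM, det_B, Finset.mul_sum, Finset.mul_sum]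
  rw [← Fin.sum_univ_eq_sum_range (fun t =>
    vand D * (MvPolynomial.C ((-1 : ℚ) ^ t * ((t : ℚ) + 1)⁻¹) * MvPolynomial.esymm (Fin D) ℚ (D - t)))]
  refine Finset.sum_congr rfl fun i _ => ?_
  have hsgn : (-1 : MvPolynomial (Fin D) ℚ) ^ D * ((-1 : MvPolynomial (Fin D) ℚ) ^ ((i : ℕ) + D))
      = (-1 : MvPolynomial (Fin D) ℚ) ^ (i : ℕ) := by
    rw [← pow_add]
    have : D + ((i : ℕ) + D) = (i : ℕ) + 2 * D := by omega
    rw [this, pow_add, pow_mul]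
    norm_num
  have hC : (-1 : MvPolynomial (Fin D) ℚ) ^ (i : ℕ) * MvPolynomial.C (((i : ℕ) + 1 : ℚ))⁻¹
      = MvPolynomial.C ((-1 : ℚ) ^ (i : ℕ) * (((i : ℕ) : ℚ) + 1)⁻¹) := by
    rw [map_mul, map_pow, map_neg, map_one]
  rw [← hC, ← hsgn]
  ring

noncomputable def Amat : Matrix (Fin D) (Fin D) (MvPolynomial (Fin D) ℚ) :=
  Matrix.of fun n v => MvPolynomial.C ((((n : ℕ) : ℚ) + 1))⁻¹ *
    Polynomial.aeval (MvPolynomial.X v) (Polynomial.bernoulli ((n : ℕ) + 1))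

noncomputable def Tmat : Matrix (Fin D) (Fin D) (MvPolynomial (Fin D) ℚ) :=
  Matrix.of fun n m => if (m : ℕ) ≤ (n : ℕ) then
    MvPolynomial.C (((((m : ℕ) + 1) * (((n : ℕ) + 2).choose ((m : ℕ) + 1)) : ℕ) : ℚ)
      / (((n : ℕ) : ℚ) + 2)) else 0

def eqv : Fin 1 × Fin D ≃ Fin D where
  toFun p := p.2
  invFun j := (0, j)
  left_inv p := by
    obtain ⟨a, b⟩ := p
    show ((0 : Fin 1), b) = (a, b)
    rw [Subsingleton.elim a 0]
  right_inv j := rfl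

lemma Fpoly_eq_det_Amat : Fpoly 1 D = (Amat D).det := by
  rw [Fpoly, ← Matrix.det_submatrix_equiv_self (eqv D) (Amat D)]
  congr 1
  refine Matrix.ext fun p q => ?_
  have hp1 : (p.1 : ℕ) = 0 := by have := p.1.isLt; omega
  have hq1 : (q.1 : ℕ) = 0 := by have := q.1.isLt; omega
  simp only [Matrix.submatrix_apply, Amat, Matrix.of_apply, eqv, Equiv.coe_fn_mk]
  have harg : (p.1 : ℕ) * D + (p.2 : ℕ) + 1 + (q.1 : ℕ) = (p.2 : ℕ) + 1 := by
    rw [hp1, hq1]; omega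
  rw [harg]
  norm_cast

lemma key_poly (n : ℕ) :
    ∑ m ∈ Finset.range (n+1),
      Polynomial.C (((((n+2).choose (m+1) : ℕ) : ℚ)) / (((n : ℚ)) + 2)) * Polynomial.bernoulli (m+1)
      = Polynomial.X ^ (n+1) - Polynomial.C (((n : ℚ) + 2))⁻¹ := by
  have h := Polynomial.sum_bernoulli (n+1)
  rw [Finset.sum_range_succ'] at h
  simp only [Polynomial.bernoulli_zero, Nat.choose_zero_right, Nat.cast_one, one_smul] at h
  -- h : ∑ i ∈ range (n+1), ((n+2).choose (i+1) : ℚ) • bernoulli (i+1) + 1 = monomial (n+1) (n+2)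
  have h2 : ((n : ℚ) + 2) ≠ 0 := by positivity
  have h3 : ∑ i ∈ Finset.range (n+1), (((n+2).choose (i+1) : ℕ) : ℚ) • Polynomial.bernoulli (i+1)
      = Polynomial.monomial (n+1) ((n : ℚ) + 2) - 1 := by
    rw [eq_sub_iff_add_eq]
    convert h using 2 <;> push_cast <;> ring_nf
  calc ∑ m ∈ Finset.range (n+1),
      Polynomial.C (((((n+2).choose (m+1) : ℕ) : ℚ)) / (((n : ℚ)) + 2)) * Polynomial.bernoulli (m+1)
      = Polynomial.C ((((n : ℚ)) + 2))⁻¹ * ∑ i ∈ Finset.range (n+1),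
          (((n+2).choose (i+1) : ℕ) : ℚ) • Polynomial.bernoulli (i+1) := by
        rw [Finset.mul_sum]
        refine Finset.sum_congr rfl fun m _ => ?_
        rw [Polynomial.smul_eq_C_mul, div_eq_inv_mul, map_mul, mul_assoc]
    _ = Polynomial.C ((((n : ℚ)) + 2))⁻¹ * (Polynomial.monomial (n+1) ((n : ℚ) + 2) - 1) := by rw [h3]
    _ = Polynomial.X ^ (n+1) - Polynomial.C (((n : ℚ) + 2))⁻¹ := by
        rw [mul_sub, mul_one]
        congr 1
        rw [Polynomial.C_mul_monomial, inv_mul_cancel₀ h2, ← Polynomial.X_pow_eq_monomial]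

lemma Tmat_mul_Amat : Tmat D * Amat D = Mmat D := by
  refine Matrix.ext fun n v => ?_
  rw [Matrix.mul_apply]
  have hterm : ∀ m : Fin D, Tmat D n m * Amat D m v
      = if (m : ℕ) ≤ (n : ℕ) then
          Polynomial.aeval (MvPolynomial.X v : MvPolynomial (Fin D) ℚ)
            (Polynomial.C ((((((n : ℕ)+2).choose ((m : ℕ)+1) : ℕ) : ℚ)) / (((n : ℕ) : ℚ) + 2))
              * Polynomial.bernoulli ((m : ℕ)+1))
        else 0 := by
    intro m
    by_cases hm : (m : ℕ) ≤ (n : ℕ)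
    · rw [Tmat, Amat, Matrix.of_apply, Matrix.of_apply, if_pos hm, if_pos hm, map_mul,
        Polynomial.aeval_C, MvPolynomial.algebraMap_eq, ← mul_assoc, ← map_mul]
      congr 2
      have hm1 : (((m : ℕ) : ℚ) + 1) ≠ 0 := by positivity
      push_cast
      field_simp
    · rw [Tmat, Matrix.of_apply, if_neg hm, if_neg hm, zero_mul]
  rw [Finset.sum_congr rfl (fun m _ => hterm m)]
  have hswap : ∑ m : Fin D, (if (m : ℕ) ≤ (n : ℕ) then
        Polynomial.aeval (MvPolynomial.X v : MvPolynomial (Fin D) ℚ)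
          (Polynomial.C ((((((n : ℕ)+2).choose ((m : ℕ)+1) : ℕ) : ℚ)) / (((n : ℕ) : ℚ) + 2))
            * Polynomial.bernoulli ((m : ℕ)+1))
      else 0)
      = ∑ k ∈ Finset.range ((n : ℕ) + 1),
          Polynomial.aeval (MvPolynomial.X v : MvPolynomial (Fin D) ℚ)
            (Polynomial.C (((((n : ℕ)+2).choose (k+1) : ℕ) : ℚ) / (((n : ℕ) : ℚ) + 2))
              * Polynomial.bernoulli (k+1)) := by
    rw [Fin.sum_univ_eq_sum_range (fun k => if k ≤ (n : ℕ) then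
        Polynomial.aeval (MvPolynomial.X v : MvPolynomial (Fin D) ℚ)
          (Polynomial.C (((((n : ℕ)+2).choose (k+1) : ℕ) : ℚ) / (((n : ℕ) : ℚ) + 2))
            * Polynomial.bernoulli (k+1)) else 0) D]
    rw [← Finset.sum_filter]
    congr 1
    ext k
    simp only [Finset.mem_filter, Finset.mem_range]
    constructor
    · rintro ⟨_, h⟩; omega
    · intro h
      exact ⟨by omega, by omega⟩
  rw [hswap, ← map_sum, key_poly ((n : ℕ))]
  rw [map_sub, map_pow, Polynomial.aeval_X, Polynomial.aeval_C, MvPolynomial.algebraMap_eq]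
  rfl

lemma det_Tmat : (Tmat D).det = MvPolynomial.C ((D ! : ℚ)) := by
  have h : (Tmat D).BlockTriangular OrderDual.toDual := by
    intro i j hij
    have hij' : (j : ℕ) > (i : ℕ) := hij
    rw [Tmat, Matrix.of_apply, if_neg (by omega)]
  rw [Matrix.det_of_lowerTriangular _ h]
  have hdiag : ∀ n : Fin D, Tmat D n n = MvPolynomial.C (((n : ℕ) : ℚ) + 1) := by
    intro n
    rw [Tmat, Matrix.of_apply, if_pos le_rfl]
    congr 1
    have hc : ((((n : ℕ)) + 2).choose ((n : ℕ) + 1)) = (n : ℕ) + 2 :=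
      Nat.choose_succ_self_right ((n : ℕ) + 1)
    rw [hc]
    have h2 : (((n : ℕ) : ℚ) + 2) ≠ 0 := by positivity
    rw [show ((((n : ℕ) + 1) * ((n : ℕ) + 2) : ℕ) : ℚ) = ((((n : ℕ)) : ℚ) + 1) * ((((n : ℕ)) : ℚ) + 2) by push_cast; ring]
    rw [mul_div_assoc, div_self h2, mul_one]
  rw [Finset.prod_congr rfl (fun n _ => hdiag n), ← map_prod]
  congr 1
  rw [Fin.prod_univ_eq_prod_range (fun k => ((k : ℚ) + 1)) D,
    ← Finset.prod_range_add_one_eq_factorial D, Nat.cast_prod]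
  push_cast
  rfl

end FoneAux

open FoneAux

/-- For every D ≥ 1,
`F_{1,D} = (1/D!) · ∏_{i<j}(x_j−x_i) · Σ_{t=0}^{D} (−1)^t E_{D,D−t}/(t+1)`,
where `E_{D,k}` is the k-th elementary symmetric polynomial. -/
theorem F_one_D_formula (D : ℕ) (hD : 1 ≤ D) :
    Fpoly 1 D =
      MvPolynomial.C ((D ! : ℚ))⁻¹ * vand D *
        ∑ t ∈ Finset.range (D + 1),
          MvPolynomial.C ((-1 : ℚ) ^ t * ((t : ℚ) + 1)⁻¹) *
            MvPolynomial.esymm (Fin D) ℚ (D - t) := by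
  have h1 : MvPolynomial.C ((D ! : ℚ)) * Fpoly 1 D = (Mmat D).det := by
    rw [Fpoly_eq_det_Amat, ← det_Tmat, ← Matrix.det_mul, Tmat_mul_Amat]
  have hfac : ((D ! : ℚ)) ≠ 0 := by
    exact_mod_cast Nat.factorial_ne_zero D
  have h2 : Fpoly 1 D = MvPolynomial.C ((D ! : ℚ))⁻¹ * (Mmat D).det := by
    rw [← h1, ← mul_assoc, ← map_mul, inv_mul_cancel₀ hfac, map_one, one_mul]
  rw [h2, det_Mmat, mul_assoc]
end

section
/- For all integers r, D ≥ 1, Δ_{r,D} = (−1)^{rD(rD+r)/2} · D^{rD(rD+r−2)/2} · F_{r,D}((D−1)/D, (D−2)/D, …, 1/D, 0), i.e., F_{r,D} evaluated at x_v = (D−v)/D for v = 1,…,D. -/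
open Nat Finset

open Polynomial in
/-- Reflection identity for Bernoulli polynomials, polynomial form. -/
lemma bernoulli_comp_one_sub (n : ℕ) :
    (Polynomial.bernoulli n).comp (1 - X) = (-1 : ℚ[X]) ^ n * Polynomial.bernoulli n := by
  induction n with
  | zero => simp
  | succ n ih =>
    have hd : derivative ((Polynomial.bernoulli (n+1)).comp (1 - X)
        - (-1 : ℚ[X]) ^ (n+1) * Polynomial.bernoulli (n+1)) = 0 := by
      rw [derivative_sub, derivative_comp, Polynomial.derivative_bernoulli_add_one,
        derivative_mul, Polynomial.derivative_bernoulli_add_one]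
      simp [ih, derivative_pow]
      ring
    have hC := eq_C_of_derivative_eq_zero hd
    have he : ((Polynomial.bernoulli (n+1)).comp (1 - X)
        - (-1 : ℚ[X]) ^ (n+1) * Polynomial.bernoulli (n+1)).eval 0 = 0 := by
      simp [eval_comp, Polynomial.bernoulli_eval_one, Polynomial.bernoulli_eval_zero,
        bernoulli'_eq_bernoulli]
    rw [coeff_zero_eq_eval_zero, he, map_zero] at hC
    linear_combination hC

/-- Reflection identity for Bernoulli polynomials: `B_n(1-x) = (-1)^n B_n(x)`. -/
lemma bernoulli_eval_one_sub (n : ℕ) (x : ℚ) :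
    (Polynomial.bernoulli n).eval (1 - x) = (-1 : ℚ) ^ n * (Polynomial.bernoulli n).eval x := by
  have := congrArg (Polynomial.eval x) (bernoulli_comp_one_sub n)
  simpa [Polynomial.eval_comp] using this

lemma gauss' (n : ℕ) : 2 * ∑ i : Fin n, (i : ℕ) = n * (n - 1) := by
  rw [Fin.sum_univ_eq_sum_range (fun i => i) n, mul_comm]
  exact Finset.sum_range_id_mul_two n

lemma exp1 (r D Sr SD : ℕ) (hr : 1 ≤ r) (hD : 1 ≤ D)
    (hSr : 2 * Sr = r * (r - 1)) (hSD : 2 * SD = D * (D - 1)) :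
    D * D * Sr + r * SD + r * D + D * Sr = r * D * (r * D + r) / 2 := by
  obtain ⟨r', rfl⟩ : ∃ r', r = r' + 1 := ⟨r - 1, by omega⟩
  obtain ⟨D', rfl⟩ : ∃ D', D = D' + 1 := ⟨D - 1, by omega⟩
  simp only [Nat.add_sub_cancel] at hSr hSD
  have h2 : (r' + 1) * (D' + 1) * ((r' + 1) * (D' + 1) + (r' + 1)) =
      ((D' + 1) * (D' + 1) * Sr + (r' + 1) * SD + (r' + 1) * (D' + 1) + (D' + 1) * Sr) * 2 := by
    have : ((D'+1)*(D'+1)*Sr + (r'+1)*SD + (r'+1)*(D'+1) + (D'+1)*Sr) * 2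
        = (D'+1)*(D'+1)*(2*Sr) + (r'+1)*(2*SD) + 2*((r'+1)*(D'+1)) + (D'+1)*(2*Sr) := by ring
    rw [this, hSr, hSD]; ring
  exact (Nat.div_eq_of_eq_mul_left two_pos h2).symm

lemma exp2 (r D Sr SD : ℕ) (hr : 1 ≤ r) (hD : 1 ≤ D)
    (hSr : 2 * Sr = r * (r - 1)) (hSD : 2 * SD = D * (D - 1)) :
    D * D * Sr + r * SD + D * Sr = r * D * (r * D + r - 2) / 2 := by
  obtain ⟨r', rfl⟩ : ∃ r', r = r' + 1 := ⟨r - 1, by omega⟩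
  obtain ⟨D', rfl⟩ : ∃ D', D = D' + 1 := ⟨D - 1, by omega⟩
  simp only [Nat.add_sub_cancel] at hSr hSD
  have e : (r' + 1) * (D' + 1) + (r' + 1) - 2 = r' * D' + 2 * r' + D' := by
    have : (r' + 1) * (D' + 1) + (r' + 1) = r' * D' + 2 * r' + D' + 2 := by ring
    rw [this, Nat.add_sub_cancel]
  rw [e]
  have h2 : (r' + 1) * (D' + 1) * (r' * D' + 2 * r' + D') =
      ((D' + 1) * (D' + 1) * Sr + (r' + 1) * SD + (D' + 1) * Sr) * 2 := by
    have : ((D'+1)*(D'+1)*Sr + (r'+1)*SD + (D'+1)*Sr) * 2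
        = (D'+1)*(D'+1)*(2*Sr) + (r'+1)*(2*SD) + (D'+1)*(2*Sr) := by ring
    rw [this, hSr, hSD]; ring
  exact (Nat.div_eq_of_eq_mul_left two_pos h2).symm

lemma sumA1 (r D : ℕ) :
    (∑ p : Fin r × Fin D, ((p.1 : ℕ) * D + (p.2 : ℕ) + 1)) =
      D * D * (∑ i : Fin r, (i : ℕ)) + r * (∑ j : Fin D, (j : ℕ)) + r * D := by
  rw [Fintype.sum_prod_type]
  simp only [Finset.sum_add_distrib, Finset.sum_const, Finset.card_univ, Fintype.card_fin,
    smul_eq_mul, mul_one, ← Finset.sum_mul, Finset.mul_sum]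
  congr 2
  exact Finset.sum_congr rfl fun x _ => by ring

lemma sumA2 (r D : ℕ) :
    (∑ p : Fin r × Fin D, ((p.1 : ℕ) * D + (p.2 : ℕ))) =
      D * D * (∑ i : Fin r, (i : ℕ)) + r * (∑ j : Fin D, (j : ℕ)) := by
  rw [Fintype.sum_prod_type]
  simp only [Finset.sum_add_distrib, Finset.sum_const, Finset.card_univ, Fintype.card_fin,
    smul_eq_mul, mul_one, ← Finset.sum_mul, Finset.mul_sum]
  congr 1
  exact Finset.sum_congr rfl fun x _ => by ring

lemma sumB (r D : ℕ) :
    (∑ q : Fin r × Fin D, (q.1 : ℕ)) = D * (∑ i : Fin r, (i : ℕ)) := by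
  rw [Fintype.sum_prod_type]
  simp only [Finset.sum_const, Finset.card_univ, Fintype.card_fin, smul_eq_mul,
    Finset.mul_sum]

/-- For all r, D ≥ 1,
`Δ_{r,D} = (−1)^{rD(rD+r)/2} · D^{rD(rD+r−2)/2} · F_{r,D}((D−1)/D,…,1/D,0)`,
i.e. `F_{r,D}` evaluated at `x_v = (D−v)/D` for `v = 1,…,D`. -/
theorem delta_eq_eval_F (r D : ℕ) (hr : 1 ≤ r) (hD : 1 ≤ D) :
    delta r D =
      (-1 : ℚ) ^ (r * D * (r * D + r) / 2) * (D : ℚ) ^ (r * D * (r * D + r - 2) / 2) *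
        MvPolynomial.eval (fun j : Fin D => ((D : ℚ) - 1 - (j : ℕ)) / D) (Fpoly r D) := by
  have hD0 : (D : ℚ) ≠ 0 := by positivity
  set ev : Fin D → ℚ := fun j => ((D : ℚ) - 1 - (j : ℕ)) / D with hev
  set M : Matrix (Fin r × Fin D) (Fin r × Fin D) ℚ := Matrix.of fun p q =>
    ((((p.1 : ℕ) * D + (p.2 : ℕ) + 1 + (q.1 : ℕ) : ℕ) : ℚ))⁻¹ *
      (Polynomial.bernoulli ((p.1 : ℕ) * D + (p.2 : ℕ) + 1 + (q.1 : ℕ))).eval (ev q.2) with hM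
  -- Step A : eval of Fpoly is det M
  have stepA : MvPolynomial.eval ev (Fpoly r D) = M.det := by
    rw [Fpoly, RingHom.map_det]
    congr 1
    ext p q
    have key : ∀ (v : Fin D) (P : Polynomial ℚ),
        MvPolynomial.eval ev (Polynomial.aeval (MvPolynomial.X v) P) = P.eval (ev v) := by
      intro v P
      rw [Polynomial.aeval_def, Polynomial.hom_eval₂]
      have : (MvPolynomial.eval ev).comp (algebraMap ℚ (MvPolynomial (Fin D) ℚ)) =
          RingHom.id ℚ := Subsingleton.elim _ _
      rw [this]
      rw [MvPolynomial.eval_X]; rfl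
    simp [RingHom.mapMatrix_apply, key, hM]
  -- the scaling functions
  set a : Fin r × Fin D → ℚ := fun p => (-1 : ℚ) ^ ((p.1 : ℕ) * D + (p.2 : ℕ) + 1) *
    (D : ℚ) ^ ((p.1 : ℕ) * D + (p.2 : ℕ)) with ha
  set b : Fin r × Fin D → ℚ := fun q => (-1 : ℚ) ^ (q.1 : ℕ) * (D : ℚ) ^ (q.1 : ℕ) with hb
  -- Step B : deltaMat entries factor
  have stepB : deltaMat r D =
      Matrix.of (fun p q => a p * (Matrix.of (fun p q : Fin r × Fin D => b q * M p q)) p q) := by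
    ext p q
    set k : ℕ := (p.1 : ℕ) * D + (p.2 : ℕ) + 1 + (q.1 : ℕ) with hk
    have hx : ev q.2 = 1 - (((q.2 : ℕ) + 1 : ℚ) / D) := by
      rw [hev]; field_simp; ring
    have hrefl : (Polynomial.bernoulli k).eval (ev q.2) =
        (-1 : ℚ) ^ k * (Polynomial.bernoulli k).eval (((q.2 : ℕ) + 1 : ℚ) / D) := by
      rw [hx, bernoulli_eval_one_sub]
    simp only [deltaMat, Matrix.of_apply, hM, ha, hb, ← hk, hrefl]
    have hsign : (-1 : ℚ) ^ ((p.1 : ℕ) * D + (p.2 : ℕ) + 1) * (-1 : ℚ) ^ (q.1 : ℕ) *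
        (-1 : ℚ) ^ k = 1 := by
      have hev2 : Even (((p.1 : ℕ) * D + (p.2 : ℕ) + 1) + (q.1 : ℕ) + k) := ⟨k, by omega⟩
      rw [← pow_add, ← pow_add, hev2.neg_one_pow]
    have hpow : (D : ℚ) ^ ((p.1 : ℕ) * D + (p.2 : ℕ)) * (D : ℚ) ^ (q.1 : ℕ) =
        (D : ℚ) ^ ((p.1 : ℕ) * D + (p.2 : ℕ) + (q.1 : ℕ)) := by
      rw [← pow_add]
    linear_combination (-(D : ℚ) ^ ((p.1 : ℕ) * D + (p.2 : ℕ)) * (D : ℚ) ^ (q.1 : ℕ) *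
        (Polynomial.bernoulli k).eval (((q.2 : ℕ) + 1 : ℚ) / D) * ((k : ℚ))⁻¹) * hsign +
      (-((Polynomial.bernoulli k).eval (((q.2 : ℕ) + 1 : ℚ) / D) * ((k : ℚ))⁻¹)) * hpow
  -- Step C : pull out the scalars
  have hprod : (∏ p : Fin r × Fin D, a p) * (∏ q : Fin r × Fin D, b q) =
      (-1 : ℚ) ^ (r * D * (r * D + r) / 2) * (D : ℚ) ^ (r * D * (r * D + r - 2) / 2) := by
    simp only [ha, hb]
    rw [Finset.prod_mul_distrib, Finset.prod_mul_distrib,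
      Finset.prod_pow_eq_pow_sum, Finset.prod_pow_eq_pow_sum,
      Finset.prod_pow_eq_pow_sum, Finset.prod_pow_eq_pow_sum,
      mul_mul_mul_comm, ← pow_add, ← pow_add]
    have e1 : (∑ p : Fin r × Fin D, ((p.1 : ℕ) * D + (p.2 : ℕ) + 1)) +
        (∑ q : Fin r × Fin D, (q.1 : ℕ)) = r * D * (r * D + r) / 2 := by
      rw [sumA1, sumB]
      exact exp1 r D _ _ hr hD (gauss' r) (gauss' D)
    have e2 : (∑ p : Fin r × Fin D, ((p.1 : ℕ) * D + (p.2 : ℕ))) +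
        (∑ q : Fin r × Fin D, (q.1 : ℕ)) = r * D * (r * D + r - 2) / 2 := by
      rw [sumA2, sumB]
      have := exp2 r D _ _ hr hD (gauss' r) (gauss' D)
      omega
    rw [e1, e2]
  rw [delta, stepB, Matrix.det_mul_column a, Matrix.det_mul_row b, stepA]
  linear_combination M.det * hprod
end

section
/- For every integer D ≥ 1, the determinant M_D of the D×D lower Hessenberg matrix whose (i,j) entry (1 ≤ i,j ≤ D) equals C(i, j−1)·B_{i−j+1} when j ≤ i, equals 1 when j = i+1, and equals 0 when j > i+1, satisfies M_D = (−1)^D/(D+1). Here B_k denotes the k-th Bernoulli number and C(i,j−1) the binomial coefficient. -/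
open Nat

open Finset in
private lemma key_bernoulli_sum (i k : ℕ) :
    ∑ j ∈ range (i + 1),
      ((i + 1).choose j : ℚ) / (i + 1) * ((j.choose k : ℚ) * bernoulli (j - k)) =
      if i = k then 1 else 0 := by
  by_cases hk : k ≤ i
  · have hsub : Finset.Ico k (i + 1) ⊆ range (i + 1) := by
      intro x hx
      simp only [Finset.mem_Ico] at hx
      exact Finset.mem_range.mpr hx.2
    rw [← Finset.sum_subset hsub (by
      intro x hx hx'
      rw [Finset.mem_range] at hx
      rw [Finset.mem_Ico, not_and, not_lt] at hx'
      have hxk : x < k := by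
        by_contra hc
        push_neg at hc
        have := hx' hc
        omega
      rw [Nat.choose_eq_zero_of_lt (show x < k from hxk)]
      simp)]
    rw [Finset.sum_Ico_eq_sum_range]
    have hterm : ∀ m ∈ range (i + 1 - k),
        ((i + 1).choose (k + m) : ℚ) / (i + 1) *
          (((k + m).choose k : ℚ) * bernoulli (k + m - k)) =
        ((i + 1).choose k : ℚ) / (i + 1) * (((i + 1 - k).choose m : ℚ) * bernoulli m) := by
      intro m hm
      rw [Finset.mem_range] at hm
      have h1 : k + m ≤ i + 1 := by omega
      have h2 : k ≤ k + m := Nat.le_add_right _ _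
      have hcm := Nat.choose_mul (n := i + 1) h2
      rw [Nat.add_sub_cancel_left] at hcm
      have hcm' : ((i + 1).choose (k + m) : ℚ) * (((k + m).choose k : ℚ)) =
          ((i + 1).choose k : ℚ) * (((i + 1 - k).choose m : ℚ)) := by
        exact_mod_cast congrArg (Nat.cast : ℕ → ℚ) hcm
      rw [Nat.add_sub_cancel_left]
      have hfin : ((i + 1).choose (k + m) : ℚ) * (((k + m).choose k : ℚ) * bernoulli m) =
          ((i + 1).choose k : ℚ) * (((i + 1 - k).choose m : ℚ) * bernoulli m) := by
        rw [← mul_assoc, hcm', mul_assoc]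
      rw [div_mul_eq_mul_div, div_mul_eq_mul_div, hfin]
    rw [Finset.sum_congr rfl hterm, ← Finset.mul_sum, sum_bernoulli]
    have hne : ((i : ℚ) + 1) ≠ 0 := by positivity
    by_cases hik : i = k
    · subst hik
      simp only [if_pos rfl]
      have h3 : i + 1 - i = 1 := by omega
      rw [h3, if_pos rfl, Nat.choose_succ_self_right, mul_one]
      push_cast
      rw [div_self hne]
    · have h4 : i + 1 - k ≠ 1 := by omega
      simp [h4, hik]
  · push_neg at hk
    have hz : ∀ j ∈ range (i + 1), ((i + 1).choose j : ℚ) / (i + 1) *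
        ((j.choose k : ℚ) * bernoulli (j - k)) = 0 := by
      intro j hj
      rw [Finset.mem_range] at hj
      rw [Nat.choose_eq_zero_of_lt (show j < k by omega)]
      simp
    rw [Finset.sum_congr rfl hz, Finset.sum_const_zero]
    have : i ≠ k := by omega
    simp [this]

private def Pmat (D : ℕ) : Matrix (Fin (D + 1)) (Fin (D + 1)) ℚ :=
  Matrix.of fun i j => ((i : ℕ).choose (j : ℕ) : ℚ) * bernoulli ((i : ℕ) - (j : ℕ))

private def Qmat (D : ℕ) : Matrix (Fin (D + 1)) (Fin (D + 1)) ℚ :=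
  Matrix.of fun i j =>
    if (j : ℕ) ≤ (i : ℕ) then (((i : ℕ) + 1).choose (j : ℕ) : ℚ) / ((i : ℕ) + 1) else 0

private lemma QP_eq_one (D : ℕ) : Qmat D * Pmat D = 1 := by
  ext i k
  rw [Matrix.mul_apply, Matrix.one_apply]
  have hstep : ∑ j : Fin (D + 1), Qmat D i j * Pmat D j k =
      ∑ j ∈ Finset.range (D + 1),
        (if j ≤ (i : ℕ) then (((i : ℕ) + 1).choose j : ℚ) / ((i : ℕ) + 1) else 0) *
          ((j.choose (k : ℕ) : ℚ) * bernoulli (j - (k : ℕ))) := by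
    rw [← Fin.sum_univ_eq_sum_range]
    rfl
  rw [hstep]
  have hsub : Finset.range ((i : ℕ) + 1) ⊆ Finset.range (D + 1) := by
    intro x hx
    rw [Finset.mem_range] at hx ⊢
    omega
  rw [← Finset.sum_subset hsub (by
    intro x hx hx'
    rw [Finset.mem_range] at hx hx'
    have hxi : ¬ x ≤ (i : ℕ) := by omega
    rw [if_neg hxi, zero_mul])]
  have h2 : ∑ j ∈ Finset.range ((i : ℕ) + 1),
      (if j ≤ (i : ℕ) then (((i : ℕ) + 1).choose j : ℚ) / ((i : ℕ) + 1) else 0) *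
        ((j.choose (k : ℕ) : ℚ) * bernoulli (j - (k : ℕ))) =
      ∑ j ∈ Finset.range ((i : ℕ) + 1),
      (((i : ℕ) + 1).choose j : ℚ) / ((i : ℕ) + 1) *
        ((j.choose (k : ℕ) : ℚ) * bernoulli (j - (k : ℕ))) := by
    refine Finset.sum_congr rfl fun j hj => ?_
    rw [Finset.mem_range] at hj
    rw [if_pos (by omega)]
  rw [h2, key_bernoulli_sum]
  simp only [Fin.val_inj]

private lemma detP (D : ℕ) : (Pmat D).det = 1 := by
  have htri : (Pmat D).BlockTriangular OrderDual.toDual := by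
    intro i j hij
    have hij' : (i : ℕ) < (j : ℕ) := hij
    simp [Pmat, Nat.choose_eq_zero_of_lt hij']
  rw [Matrix.det_of_lowerTriangular _ htri]
  apply Finset.prod_eq_one
  intro i _
  simp [Pmat]

private lemma adjP (D : ℕ) : (Pmat D).adjugate = Qmat D := by
  calc (Pmat D).adjugate = 1 * (Pmat D).adjugate := (one_mul _).symm
    _ = (Qmat D * Pmat D) * (Pmat D).adjugate := by rw [QP_eq_one]
    _ = Qmat D * (Pmat D * (Pmat D).adjugate) := by rw [Matrix.mul_assoc]
    _ = Qmat D * ((Pmat D).det • 1) := by rw [Matrix.mul_adjugate]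
    _ = Qmat D := by rw [detP]; simp

/-- The determinant `M_D` of the D×D lower Hessenberg matrix whose (i,j)
entry (1-indexed) is `C(i,j−1)·B_{i−j+1}` for `j ≤ i`, is 1 for `j = i+1`, and is 0 for
`j > i+1`, equals `(−1)^D/(D+1)`.  (Here rows and columns are 0-indexed, so the 1-indexed
entry at `(i+1,j+1)` is `C(i+1,j)·B_{i+1−j}` for `j ≤ i`.) -/
theorem hessenberg_bernoulli_det (D : ℕ) (hD : 1 ≤ D) :
    Matrix.det (Matrix.of fun (i j : Fin D) =>
      if (j : ℕ) ≤ (i : ℕ) then (Nat.choose ((i : ℕ) + 1) (j : ℕ) : ℚ) * bernoulli ((i : ℕ) + 1 - (j : ℕ))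
      else if (j : ℕ) = (i : ℕ) + 1 then 1 else 0) = (-1 : ℚ) ^ D / ((D : ℚ) + 1) := by
  have hM : (Matrix.of fun (i j : Fin D) =>
      if (j : ℕ) ≤ (i : ℕ) then (Nat.choose ((i : ℕ) + 1) (j : ℕ) : ℚ) * bernoulli ((i : ℕ) + 1 - (j : ℕ))
      else if (j : ℕ) = (i : ℕ) + 1 then 1 else 0) =
      (Pmat D).submatrix Fin.succ Fin.castSucc := by
    ext i j
    simp only [Matrix.of_apply, Matrix.submatrix_apply, Pmat, Fin.val_succ, Fin.coe_castSucc]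
    by_cases h1 : (j : ℕ) ≤ (i : ℕ)
    · rw [if_pos h1]
    · rw [if_neg h1]
      by_cases h2 : (j : ℕ) = (i : ℕ) + 1
      · rw [if_pos h2, h2]
        simp
      · rw [if_neg h2]
        rw [Nat.choose_eq_zero_of_lt (show (i : ℕ) + 1 < (j : ℕ) by omega)]
        simp
  have hadj := Matrix.adjugate_fin_succ_eq_det_submatrix (Pmat D) (Fin.last D) 0
  rw [adjP] at hadj
  have hq : Qmat D (Fin.last D) 0 = 1 / ((D : ℚ) + 1) := by
    simp [Qmat]
  rw [hq] at hadj
  simp only [Fin.succAbove_zero, Fin.succAbove_last, Fin.val_zero, Fin.val_last, zero_add] at hadj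
  rw [hM]
  have hsq : ((-1 : ℚ) ^ D) * ((-1 : ℚ) ^ D) = 1 := by
    rw [← mul_pow]; norm_num
  calc ((Pmat D).submatrix Fin.succ Fin.castSucc).det
      = (((-1 : ℚ) ^ D) * ((-1 : ℚ) ^ D)) * ((Pmat D).submatrix Fin.succ Fin.castSucc).det := by
        rw [hsq, one_mul]
    _ = (-1 : ℚ) ^ D * ((-1 : ℚ) ^ D * ((Pmat D).submatrix Fin.succ Fin.castSucc).det) := by ring
    _ = (-1 : ℚ) ^ D * (1 / ((D : ℚ) + 1)) := by rw [← hadj]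
    _ = (-1 : ℚ) ^ D / ((D : ℚ) + 1) := by ring
end

section
/- Let ℓ ≥ 1 and 1 ≤ j ≤ ℓ+1 be integers and let x_1,…,x_j be pairwise distinct rational numbers (or elements of any field of characteristic zero). Then the (j−1)-st divided difference of the Bernoulli polynomial B_ℓ at the nodes x_1,…,x_j, namely Σ_{k=1}^{j} B_ℓ(x_k)/∏_{i≠k}(x_k−x_i), equals Σ_{t=0}^{ℓ−j+1} C(ℓ, t+j−1)·B_{ℓ−j+1−t}·h_t(x_1,…,x_j), where h_t denotes the complete homogeneous symmetric polynomial of degree t (the sum of all monomials of degree t in x_1,…,x_j, with h_0 = 1) and B_k denotes the k-th Bernoulli number. -/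
open Nat Finset


noncomputable section
namespace DDB

def Hval {α : Type*} [Fintype α] [DecidableEq α] (f : α → ℚ) (t : ℕ) : ℚ :=
  ∑ s : Sym α t, (s.1.map f).prod

lemma eval_hsymm {α : Type*} [Fintype α] [DecidableEq α] (f : α → ℚ) (t : ℕ) :
    MvPolynomial.eval f (MvPolynomial.hsymm α ℚ t) = Hval f t := by
  simp [MvPolynomial.hsymm, Hval, map_multiset_prod, Multiset.map_map, Function.comp]

lemma Hval_zero {α : Type*} [Fintype α] [DecidableEq α] (f : α → ℚ) : Hval f 0 = 1 := by
  simp [Hval, Sym.eq_nil_of_card_zero]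

lemma Hval_isEmpty {α : Type*} [Fintype α] [DecidableEq α] [IsEmpty α] (f : α → ℚ) (t : ℕ) :
    Hval f (t+1) = 0 := by
  rw [Hval, Finset.sum_eq_zero]
  intro s _
  obtain ⟨a, -⟩ := Multiset.card_pos_iff_exists_mem.1 (by rw [s.2]; omega)
  exact isEmptyElim a

lemma Hval_option {α : Type*} [Fintype α] [DecidableEq α] (f : Option α → ℚ) (t : ℕ) :
    Hval f (t+1) = f none * Hval f t + Hval (f ∘ some) (t+1) := by
  have h1 : Hval f (t+1) = ∑ u : Sym (Option α) t ⊕ Sym α (t+1),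
      ((((symOptionSuccEquiv.symm u) : Sym (Option α) (t+1)) : Multiset (Option α)).map f).prod :=
    Fintype.sum_equiv (symOptionSuccEquiv (α := α) (n := t)) _ _ (fun s => by simp)
  rw [h1, Fintype.sum_sum_type]
  congr 1
  · rw [Hval, Finset.mul_sum]
    refine Finset.sum_congr rfl fun s _ => ?_
    simp [symOptionSuccEquiv, SymOptionSuccEquiv.decode, Sym.coe_cons, mul_comm]
  · rw [Hval]
    refine Finset.sum_congr rfl fun s _ => ?_
    simp [symOptionSuccEquiv, SymOptionSuccEquiv.decode, Multiset.map_map, Function.comp]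


lemma leadingCoeff_basisDivisor {a b : ℚ} (hab : a ≠ b) :
    (Lagrange.basisDivisor a b).leadingCoeff = (a - b)⁻¹ := by
  rw [Lagrange.basisDivisor, Polynomial.leadingCoeff_mul, Polynomial.leadingCoeff_C,
    (Polynomial.monic_X_sub_C b).leadingCoeff, mul_one]

lemma coeff_basis (m : ℕ) (x : Fin m → ℚ) (hx : Function.Injective x) (k : Fin m) :
    (Lagrange.basis Finset.univ x k).coeff (m - 1) = (∏ i ∈ univ.erase k, (x k - x i))⁻¹ := by
  have hinj : Set.InjOn x (Finset.univ : Finset (Fin m)) := fun a _ b _ h => hx h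
  have hnd := Lagrange.natDegree_basis hinj (Finset.mem_univ k)
  rw [Finset.card_univ, Fintype.card_fin] at hnd
  rw [← hnd, Polynomial.coeff_natDegree, Lagrange.basis, Polynomial.leadingCoeff_prod,
    ← Finset.prod_inv_distrib]
  refine Finset.prod_congr rfl fun i hi => ?_
  exact leadingCoeff_basisDivisor (fun h => (Finset.mem_erase.1 hi).1 (hx h).symm)

lemma sum_inv_prod_eq_zero (m : ℕ) (hm : 2 ≤ m) (x : Fin m → ℚ) (hx : Function.Injective x) :
    ∑ k : Fin m, (∏ i ∈ univ.erase k, (x k - x i))⁻¹ = 0 := by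
  have hinj : Set.InjOn x (Finset.univ : Finset (Fin m)) := fun a _ b _ h => hx h
  have : Nonempty (Fin m) := ⟨⟨0, by omega⟩⟩
  have hsb := Lagrange.sum_basis hinj Finset.univ_nonempty
  have h2 := congrArg (fun p => Polynomial.coeff p (m - 1)) hsb
  simp only [Polynomial.finset_sum_coeff] at h2
  rw [Finset.sum_congr rfl (fun k _ => coeff_basis m x hx k)] at h2
  rw [h2, Polynomial.coeff_one, if_neg (by omega)]

lemma Hval_comp_equiv {α β : Type*} [Fintype α] [DecidableEq α] [Fintype β] [DecidableEq β]
    (e : α ≃ β) (f : β → ℚ) (t : ℕ) : Hval (f ∘ e) t = Hval f t := by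
  refine Fintype.sum_equiv (Sym.equivCongr e) _ _ fun s => ?_
  simp [Sym.equivCongr, Sym.coe_map, Multiset.map_map, Function.comp]

lemma Hval_succ (j : ℕ) (x : Fin (j+1) → ℚ) (t : ℕ) :
    Hval x (t+1) = x (Fin.last j) * Hval x t + Hval (x ∘ Fin.castSucc) (t+1) := by
  have key : ∀ u, Hval x u = Hval (x ∘ (finSuccEquivLast (n := j)).symm) u := by
    intro u
    rw [← Hval_comp_equiv (finSuccEquivLast (n := j)) (x ∘ finSuccEquivLast.symm) u]
    congr 1
    ext i
    simp
  rw [key (t+1), key t, Hval_option]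
  have h1 : (x ∘ (finSuccEquivLast (n := j)).symm) none = x (Fin.last j) := by simp
  have h2 : (x ∘ (finSuccEquivLast (n := j)).symm) ∘ some = x ∘ Fin.castSucc := by
    ext i; simp [finSuccEquivLast_symm_some]
  rw [h1, h2]


def DD (j : ℕ) (x : Fin j → ℚ) (n : ℕ) : ℚ :=
  ∑ k : Fin j, x k ^ n / ∏ i ∈ univ.erase k, (x k - x i)

lemma DD_zero (x : Fin 0 → ℚ) (n : ℕ) : DD 0 x n = 0 := by simp [DD]

lemma prod_erase_castSucc (j : ℕ) (x : Fin (j+1) → ℚ) (k : Fin j) :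
    ∏ i ∈ (univ : Finset (Fin (j+1))).erase (Fin.castSucc k), (x (Fin.castSucc k) - x i)
    = (x (Fin.castSucc k) - x (Fin.last j)) *
      ∏ i ∈ (univ : Finset (Fin j)).erase k, (x (Fin.castSucc k) - x (Fin.castSucc i)) := by
  have hne : Fin.last j ≠ Fin.castSucc k := (Fin.castSucc_lt_last k).ne'
  have hmem : Fin.last j ∈ (univ : Finset (Fin (j+1))).erase (Fin.castSucc k) :=
    Finset.mem_erase.2 ⟨hne, Finset.mem_univ _⟩
  rw [← Finset.mul_prod_erase _ _ hmem]
  congr 1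
  have h3 : ((univ : Finset (Fin (j+1))).erase (Fin.castSucc k)).erase (Fin.last j)
      = Finset.image Fin.castSucc ((univ : Finset (Fin j)).erase k) := by
    ext i
    simp only [Finset.mem_erase, Finset.mem_univ, and_true, Finset.mem_image]
    constructor
    · rintro ⟨hil, hik⟩
      obtain ⟨a, rfl⟩ := Fin.exists_castSucc_eq.2 hil
      exact ⟨a, fun h => hik (by rw [h]), rfl⟩
    · rintro ⟨a, hak, rfl⟩
      exact ⟨(Fin.castSucc_lt_last a).ne, fun h => hak (Fin.castSucc_injective j h)⟩
  rw [h3, Finset.prod_image]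
  intro a _ b _ h
  exact Fin.castSucc_injective j h

lemma DD_succ (j : ℕ) (x : Fin (j+1) → ℚ) (hx : Function.Injective x) (n : ℕ) :
    DD (j+1) x (n+1) = x (Fin.last j) * DD (j+1) x n + DD j (x ∘ Fin.castSucc) n := by
  simp only [DD, Function.comp]
  have hterm : ∀ k : Fin j,
      x (Fin.castSucc k) ^ (n+1) / ∏ i ∈ (univ : Finset (Fin (j+1))).erase (Fin.castSucc k), (x (Fin.castSucc k) - x i)
      = x (Fin.last j) * (x (Fin.castSucc k) ^ n / ∏ i ∈ (univ : Finset (Fin (j+1))).erase (Fin.castSucc k), (x (Fin.castSucc k) - x i))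
        + x (Fin.castSucc k) ^ n / ∏ i ∈ (univ : Finset (Fin j)).erase k, (x (Fin.castSucc k) - x (Fin.castSucc i)) := by
    intro k
    rw [prod_erase_castSucc j x k]
    have h1 : x (Fin.castSucc k) - x (Fin.last j) ≠ 0 :=
      sub_ne_zero.2 fun h => (Fin.castSucc_lt_last k).ne (hx h)
    have h2 : (∏ i ∈ (univ : Finset (Fin j)).erase k, (x (Fin.castSucc k) - x (Fin.castSucc i))) ≠ 0 :=
      Finset.prod_ne_zero_iff.2 fun i hi => sub_ne_zero.2 fun h =>
        (Finset.mem_erase.1 hi).1 (Fin.castSucc_injective _ (hx h)).symm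
    field_simp
    ring
  rw [Fin.sum_univ_castSucc
    (f := fun k => x k ^ (n+1) / ∏ i ∈ (univ : Finset (Fin (j+1))).erase k, (x k - x i)),
    Fin.sum_univ_castSucc
    (f := fun k => x k ^ n / ∏ i ∈ (univ : Finset (Fin (j+1))).erase k, (x k - x i))]
  rw [Finset.sum_congr rfl (fun k _ => hterm k), Finset.sum_add_distrib, ← Finset.mul_sum]
  rw [pow_succ]
  ring

lemma DD_eq : ∀ (j : ℕ), 1 ≤ j → ∀ (x : Fin j → ℚ), Function.Injective x → ∀ n : ℕ,
    DD j x n = if j - 1 ≤ n then Hval x (n - (j - 1)) else 0 := by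
  intro j
  induction j with
  | zero => omega
  | succ m ih =>
    intro _ x hx n
    simp only [Nat.add_sub_cancel]
    induction n with
    | zero =>
      rcases Nat.eq_zero_or_pos m with rfl | hm
      · rw [if_pos le_rfl]
        simp [DD, Hval_zero, Finset.eq_empty_of_forall_notMem (s := (univ : Finset (Fin 1)).erase 0)]
      · rw [if_neg (by omega)]
        have h := sum_inv_prod_eq_zero (m+1) (by omega) x hx
        simpa [DD, one_div] using h
    | succ n ihn =>
      rw [DD_succ m x hx n, ihn]
      rcases Nat.eq_zero_or_pos m with rfl | hm
      · rw [DD_zero, if_pos (by omega), if_pos (by omega), Nat.sub_zero, Nat.sub_zero,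
          Hval_succ 0 x n, Hval_isEmpty]
      · have hB := ih hm (x ∘ Fin.castSucc) (hx.comp (Fin.castSucc_injective m)) n
        rw [hB]
        by_cases h1 : m ≤ n
        · rw [if_pos h1, if_pos (by omega), if_pos (by omega)]
          have e1 : n + 1 - m = (n - m) + 1 := by omega
          have e2 : n - (m - 1) = (n - m) + 1 := by omega
          rw [e1, e2, Hval_succ m x (n - m)]
        · by_cases h2 : m = n + 1
          · rw [if_neg h1, if_pos (by omega), if_pos (by omega)]
            have e1 : n - (m - 1) = 0 := by omega
            have e2 : n + 1 - m = 0 := by omega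
            rw [e1, e2, Hval_zero, Hval_zero]
            ring
          · rw [if_neg h1, if_neg (by omega), if_neg (by omega)]
            ring

end DDB


/-- For integers ℓ ≥ 1 and 1 ≤ j ≤ ℓ+1 and pairwise distinct rationals
x_1,…,x_j, the (j−1)-st divided difference of the Bernoulli polynomial B_ℓ at x_1,…,x_j,
namely `Σ_{k=1}^{j} B_ℓ(x_k)/∏_{i≠k}(x_k−x_i)`, equals
`Σ_{t=0}^{ℓ−j+1} C(ℓ,t+j−1)·B_{ℓ−j+1−t}·h_t(x_1,…,x_j)`, where `h_t` is the complete
homogeneous symmetric polynomial of degree t and `B_k` the k-th Bernoulli number. -/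
theorem divided_difference_bernoulli (ℓ j : ℕ) (hℓ : 1 ≤ ℓ) (hj : 1 ≤ j) (hjℓ : j ≤ ℓ + 1)
    (x : Fin j → ℚ) (hx : Function.Injective x) :
    ∑ k : Fin j,
        (Polynomial.bernoulli ℓ).eval (x k) / ∏ i ∈ Finset.univ.erase k, (x k - x i) =
      ∑ t ∈ Finset.range (ℓ + 1 - j + 1),
        (Nat.choose ℓ (t + (j - 1)) : ℚ) * bernoulli (ℓ + 1 - j - t) *
          MvPolynomial.eval x (MvPolynomial.hsymm (Fin j) ℚ t) := by
  classical
  have heval : ∀ y : ℚ, (Polynomial.bernoulli ℓ).eval y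
      = ∑ i ∈ Finset.range (ℓ+1), _root_.bernoulli i * (Nat.choose ℓ i : ℚ) * y ^ (ℓ - i) := by
    intro y
    rw [Polynomial.bernoulli, Polynomial.eval_finset_sum]
    refine Finset.sum_congr rfl fun i _ => ?_
    rw [Polynomial.eval_monomial, mul_comm (_root_.bernoulli i) ((Nat.choose ℓ i : ℚ))]
  have step1 : ∑ k : Fin j,
        (Polynomial.bernoulli ℓ).eval (x k) / ∏ i ∈ Finset.univ.erase k, (x k - x i)
      = ∑ i ∈ Finset.range (ℓ+1),
          _root_.bernoulli i * (Nat.choose ℓ i : ℚ) * DDB.DD j x (ℓ - i) := by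
    rw [Finset.sum_congr rfl fun k _ => by rw [heval (x k), Finset.sum_div]]
    rw [Finset.sum_comm]
    refine Finset.sum_congr rfl fun i _ => ?_
    rw [DDB.DD, Finset.mul_sum]
    refine Finset.sum_congr rfl fun k _ => ?_
    rw [mul_div_assoc]
  rw [step1]
  rw [Finset.sum_congr rfl fun i _ => by rw [DDB.DD_eq j hj x hx (ℓ - i)]]
  rw [← Finset.sum_subset (Finset.range_subset_range.2 (show ℓ + 1 - j + 1 ≤ ℓ + 1 by omega))
      (fun i hi hni => by
        rw [if_neg (by simp only [Finset.mem_range] at hi hni; omega), mul_zero])]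
  simp only [DDB.eval_hsymm]
  rw [← Finset.sum_range_reflect
    (fun t => (Nat.choose ℓ (t + (j - 1)) : ℚ) * _root_.bernoulli (ℓ + 1 - j - t) * DDB.Hval x t)
    (ℓ + 1 - j + 1)]
  refine Finset.sum_congr rfl fun i hi => ?_
  have hi' : i ≤ ℓ + 1 - j := by simp only [Finset.mem_range] at hi; omega
  rw [if_pos (by omega)]
  have e1 : ℓ + 1 - j + 1 - 1 - i = ℓ + 1 - j - i := by omega
  have e2 : (ℓ + 1 - j - i) + (j - 1) = ℓ - i := by omega
  have e3 : ℓ + 1 - j - (ℓ + 1 - j - i) = i := by omega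
  have e4 : ℓ - i - (j - 1) = ℓ + 1 - j - i := by omega
  have e5 : Nat.choose ℓ (ℓ - i) = Nat.choose ℓ i := by
    rw [← Nat.choose_symm (show i ≤ ℓ by omega)]
  rw [e1, e2, e3, e4, e5]
  ring
end
end
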